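/- arXiv:0708.0246 — 10 statements merged into one kernel-verified Lean document; each statement's English description precedes it below -/
import Mathlib

section
/- Let R be a ring and φ : R → S a ring homomorphism. The set σ of morphisms s in the category of finitely presented right R-modules such that s ⊗_R S is an isomorphism is a severe right Ore set: it contains all isomorphisms, is closed under composition, is closed under pushouts (given s : A → B in σ and a : A → C, the pushout of s along a lies in σ), and is severely right revengeful (if s : A → B lies in σ and a : B → C satisfies s ∘ a = 0, then the cokernel map C → coker(a) lies in σ). -/
open CategoryTheory CategoryTheory.Limits

universe u

/-- The pushout of `s : A ⟶ B` along `a : A ⟶ C'`, defined via the cokernel of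
`(s a) : A ⟶ B ⊞ C'`. -/
lemma inr_cokernelπ_isIso {𝒜 : Type*} [Category 𝒜] [Preadditive 𝒜] [HasBinaryBiproducts 𝒜]
    {A B C' : 𝒜} (s : A ⟶ B) (a : A ⟶ C') [IsIso s] [HasCokernel (biprod.lift s a)] :
    IsIso (biprod.inr ≫ cokernel.π (biprod.lift s a)) := by
  have hcond : s ≫ biprod.inl ≫ cokernel.π (biprod.lift s a)
      + a ≫ biprod.inr ≫ cokernel.π (biprod.lift s a) = 0 := by
    rw [← Category.assoc s, ← Category.assoc a, ← Preadditive.add_comp, ← biprod.lift_eq]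
    exact cokernel.condition _
  have hinl : biprod.inl ≫ cokernel.π (biprod.lift s a)
      = -(inv s ≫ a ≫ biprod.inr ≫ cokernel.π (biprod.lift s a)) := by
    rw [← cancel_epi s, Preadditive.comp_neg, IsIso.hom_inv_id_assoc]
    exact eq_neg_of_add_eq_zero_left hcond
  have hu : biprod.lift s a ≫ biprod.desc (-(inv s ≫ a)) (𝟙 C') = 0 := by
    rw [biprod.lift_desc]; simp
  refine ⟨⟨cokernel.desc (biprod.lift s a) (biprod.desc (-(inv s ≫ a)) (𝟙 C')) hu, ?_, ?_⟩⟩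
  · rw [Category.assoc, cokernel.π_desc, biprod.inr_desc]
  · rw [← cancel_epi (cokernel.π (biprod.lift s a)), Category.comp_id, ← Category.assoc,
      cokernel.π_desc]
    apply biprod.hom_ext'
    · simp [hinl]
    · simp

noncomputable def pushoutAlong {R : Type u} [Ring R]
    {A B C' : ModuleCat.{u} R} (s : A ⟶ B) (a : A ⟶ C') :
    C' ⟶ cokernel (biprod.lift s a) :=
  biprod.inr ≫ cokernel.π (biprod.lift s a)

/-- Let `φ : R →+* S` be a ring homomorphism and let `F = - ⊗_R S` be the induction
functor, i.e. the left adjoint to restriction of scalars along `φ`.  The set `σ` of maps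
`s` between finitely presented `R`-modules such that `s ⊗_R S` is an isomorphism is a
severe right Ore set: it contains all isomorphisms, is closed under composition, under
pushouts, and is severely right revengeful. -/
theorem tensor_inverted_severe_right_ore
    {R : Type u} [Ring R] {S : Type u} [Ring S] (φ : R →+* S)
    (F : ModuleCat.{u} R ⥤ ModuleCat.{u} S)
    (adj : F ⊣ ModuleCat.restrictScalars φ) :
    (∀ ⦃A B : ModuleCat.{u} R⦄,
      Module.FinitePresentation R A → Module.FinitePresentation R B →
      ∀ (f : A ⟶ B), IsIso f → IsIso (F.map f)) ∧
    (∀ ⦃A B B' : ModuleCat.{u} R⦄,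
      Module.FinitePresentation R A → Module.FinitePresentation R B →
      Module.FinitePresentation R B' →
      ∀ (f : A ⟶ B) (g : B ⟶ B'),
      IsIso (F.map f) → IsIso (F.map g) → IsIso (F.map (f ≫ g))) ∧
    (∀ ⦃A B C' : ModuleCat.{u} R⦄,
      Module.FinitePresentation R A → Module.FinitePresentation R B →
      Module.FinitePresentation R C' →
      ∀ (s : A ⟶ B) (a : A ⟶ C'),
      IsIso (F.map s) → IsIso (F.map (pushoutAlong s a))) ∧
    (∀ ⦃A B C' : ModuleCat.{u} R⦄,
      Module.FinitePresentation R A → Module.FinitePresentation R B →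
      Module.FinitePresentation R C' →
      ∀ (s : A ⟶ B) (a : B ⟶ C'),
      IsIso (F.map s) → s ≫ a = 0 → IsIso (F.map (cokernel.π a))) := by
  haveI : F.IsLeftAdjoint := ⟨_, ⟨adj⟩⟩
  haveI hpc : PreservesColimitsOfSize.{0, 0} F := adj.leftAdjoint_preservesColimits
  haveI : PreservesBinaryBiproducts F := preservesBinaryBiproducts_of_preservesBinaryCoproducts F
  haveI : F.Additive := Functor.additive_of_preservesBinaryBiproducts F
  refine ⟨?_, ?_, ?_, ?_⟩
  · intro A B _ _ f hf
    haveI := hf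
    infer_instance
  · intro A B B' _ _ _ f g hf hg
    haveI := hf; haveI := hg
    rw [F.map_comp]
    infer_instance
  · intro A B C' _ _ _ s a hs
    haveI := hs
    rw [pushoutAlong, F.map_comp, ← π_comp_cokernelComparison]
    haveI : IsIso (F.map biprod.inr ≫ cokernel.π (F.map (biprod.lift s a))) := by
      have hFl : F.map (biprod.lift s a)
          = biprod.lift (F.map s) (F.map a) ≫ (F.mapBiprod B C').inv :=
        (biprod.lift_mapBiprod F B C' s a).symm
      have hinr : F.map (biprod.inr : C' ⟶ B ⊞ C')
          = biprod.inr ≫ (F.mapBiprod B C').inv := by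
        rw [Functor.mapBiprod_inv, biprod.inr_desc]
      set j : cokernel (F.map (biprod.lift s a)) ⟶
          cokernel (biprod.lift (F.map s) (F.map a)) :=
        (cokernelIsoOfEq hFl).hom ≫
          (cokernelCompIsIso (biprod.lift (F.map s) (F.map a)) (F.mapBiprod B C').inv).hom
        with hj
      haveI : IsIso j := by rw [hj]; infer_instance
      have key : (F.map biprod.inr ≫ cokernel.π (F.map (biprod.lift s a))) ≫ j
          = biprod.inr ≫ cokernel.π (biprod.lift (F.map s) (F.map a)) := by
        rw [hj, hinr, Category.assoc, Category.assoc, π_comp_cokernelIsoOfEq_hom_assoc,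
          cokernelCompIsIso_hom, cokernel.π_desc, IsIso.Iso.inv_inv, Iso.inv_hom_id_assoc]
      haveI : IsIso ((F.map biprod.inr ≫ cokernel.π (F.map (biprod.lift s a))) ≫ j) := by
        rw [key]
        exact inr_cokernelπ_isIso (F.map s) (F.map a)
      exact IsIso.of_isIso_comp_right _ j
    rw [← Category.assoc]
    infer_instance
  · intro A B C' _ _ _ s a hs h0
    haveI := hs
    have ha : F.map a = 0 := by
      have h := congrArg F.map h0
      rw [F.map_comp, F.map_zero] at h
      rw [← IsIso.inv_hom_id_assoc (F.map s) (F.map a), h, comp_zero]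
    rw [← π_comp_cokernelComparison]
    haveI : IsIso (cokernel.π (F.map a)) := by
      have : cokernel.π (F.map a)
          = cokernel.π (0 : F.obj B ⟶ F.obj C') ≫ (cokernelIsoOfEq ha).inv :=
        (π_comp_cokernelIsoOfEq_inv ha).symm
      rw [this]
      infer_instance
    infer_instance
end

section
/- Let ρ be a Sylvester rank function on an additive category with cokernels. If α : A → B is ρ-full and β : B → C satisfies α ∘ β = 0, then the cokernel map γ : C → coker(β) is ρ-full. -/
open CategoryTheory CategoryTheory.Limits

universe v u

/-- A Sylvester rank function on an additive category with cokernels. -/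
structure SylvesterRank (C : Type u) [Category.{v} C] [Preadditive C]
    [HasCokernels C] [HasBinaryBiproducts C] where
  rk : C → ℕ
  rk_iso : ∀ {A B : C}, (A ≅ B) → rk A = rk B
  rk_biprod : ∀ A B : C, rk (A ⊞ B) = rk A + rk B
  rk_coker_le : ∀ {A B : C} (f : A ⟶ B), rk (cokernel f) ≤ rk B
  rk_le : ∀ {A B : C} (f : A ⟶ B), rk B ≤ rk A + rk (cokernel f)

/-- A map `f : A ⟶ B` is `ρ`-full if `ρ(A) = ρ(B)` and `ρ(coker f) = 0`. -/
def SylvesterRank.IsRhoFull {C : Type u} [Category.{v} C] [Preadditive C]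
    [HasCokernels C] [HasBinaryBiproducts C] (ρ : SylvesterRank C)
    {A B : C} (f : A ⟶ B) : Prop :=
  ρ.rk A = ρ.rk B ∧ ρ.rk (cokernel f) = 0

lemma SylvesterRank.rk_zero {C : Type u} [Category.{v} C] [Preadditive C]
    [HasCokernels C] [HasBinaryBiproducts C] (ρ : SylvesterRank C)
    {Z : C} (hZ : IsZero Z) : ρ.rk Z = 0 := by
  have h1 : ρ.rk Z = ρ.rk (Z ⊞ Z) := ρ.rk_iso (isoZeroBiprod hZ)
  have h2 := ρ.rk_biprod Z Z
  omega

/-- If `α : A ⟶ B` is `ρ`-full and `β : B ⟶ C'` satisfies `α ≫ β = 0`, then the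
cokernel map `γ : C' ⟶ coker β` is `ρ`-full. -/
theorem rhoFull_cokernel_of_comp_zero {C : Type u} [Category.{v} C] [Preadditive C]
    [HasCokernels C] [HasBinaryBiproducts C] (ρ : SylvesterRank C)
    {A B C' : C} (α : A ⟶ B) (β : B ⟶ C')
    (hα : ρ.IsRhoFull α) (h : α ≫ β = 0) :
    ρ.IsRhoFull (cokernel.π β) := by
  obtain ⟨_, hcoker⟩ := hα
  set β' : cokernel α ⟶ C' := cokernel.desc α β h with hβ'
  have hfac : cokernel.π α ≫ β' = β := cokernel.π_desc α β h
  have hiso : ρ.rk (cokernel β) = ρ.rk (cokernel β') := by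
    have e1 : cokernel β ≅ cokernel (cokernel.π α ≫ β') :=
      cokernelIsoOfEq hfac.symm
    exact (ρ.rk_iso e1).trans (ρ.rk_iso (cokernelEpiComp (cokernel.π α) β'))
  have h1 : ρ.rk C' ≤ ρ.rk (cokernel α) + ρ.rk (cokernel β') := ρ.rk_le β'
  have h2 : ρ.rk (cokernel β) ≤ ρ.rk C' := ρ.rk_coker_le β
  constructor
  · omega
  · have hz : cokernel.π (cokernel.π β) = 0 := by
      rw [← cancel_epi (cokernel.π β)]
      simp
    have hid : 𝟙 (cokernel (cokernel.π β)) = 0 := by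
      rw [← cancel_epi (cokernel.π (cokernel.π β))]
      simp [hz]
    exact ρ.rk_zero ((IsZero.iff_id_eq_zero _).mpr hid)
end

section
/- Let ρ be a Sylvester rank function on the category of finitely presented right R-modules. Then the set of ρ-full maps is a severe right Ore set: it contains all isomorphisms, is closed under composition, is closed under pushouts, and is severely right revengeful. -/
open CategoryTheory CategoryTheory.Limits

universe u

/-- A Sylvester rank function on the category of finitely presented right `R`-modules:
a map from (finitely presented) `R`-modules to `ℕ`, invariant under isomorphism,
additive on direct sums, and satisfying `ρ(coker f) ≤ ρ(B) ≤ ρ(A) + ρ(coker f)` for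
every map `f : A ⟶ B` of finitely presented modules. -/
structure SylvesterRankFP (R : Type u) [Ring R] where
  rk : ModuleCat.{u} R → ℕ
  rk_iso : ∀ {A B : ModuleCat.{u} R}, Module.FinitePresentation R A →
    Module.FinitePresentation R B → (A ≅ B) → rk A = rk B
  rk_biprod : ∀ (A B : ModuleCat.{u} R), Module.FinitePresentation R A →
    Module.FinitePresentation R B → rk (A ⊞ B) = rk A + rk B
  rk_coker_le : ∀ {A B : ModuleCat.{u} R} (f : A ⟶ B), Module.FinitePresentation R A →
    Module.FinitePresentation R B → rk (cokernel f) ≤ rk B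
  rk_le : ∀ {A B : ModuleCat.{u} R} (f : A ⟶ B), Module.FinitePresentation R A →
    Module.FinitePresentation R B → rk B ≤ rk A + rk (cokernel f)

/-- A map `f : A ⟶ B` is `ρ`-full if `ρ(A) = ρ(B)` and `ρ(coker f) = 0`. -/
def SylvesterRankFP.IsRhoFull {R : Type u} [Ring R] (ρ : SylvesterRankFP R)
    {A B : ModuleCat.{u} R} (f : A ⟶ B) : Prop :=
  ρ.rk A = ρ.rk B ∧ ρ.rk (cokernel f) = 0

section Helpers

variable {R : Type u} [Ring R]

lemma fp_equiv' {M N : Type u} [AddCommGroup M] [Module R M] [AddCommGroup N] [Module R N]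
    (h : Module.FinitePresentation R M) (e : M ≃ₗ[R] N) : Module.FinitePresentation R N := by
  haveI := h
  exact Module.finitePresentation_of_surjective e.toLinearMap e.surjective
    (by rw [LinearMap.ker_eq_bot.mpr e.injective]; exact Submodule.fg_bot)

lemma fg_range' {M N : Type u} [AddCommGroup M] [Module R M] [AddCommGroup N] [Module R N]
    (h : Module.FinitePresentation R M) (f : M →ₗ[R] N) : (LinearMap.range f).FG := by
  haveI := h
  rw [← Submodule.map_top]
  exact Submodule.FG.map f Module.Finite.fg_top

lemma fp_quot_range {M N : Type u} [AddCommGroup M] [Module R M] [AddCommGroup N] [Module R N]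
    (hM : Module.FinitePresentation R M) (hN : Module.FinitePresentation R N) (f : M →ₗ[R] N) :
    Module.FinitePresentation R (N ⧸ LinearMap.range f) := by
  haveI := hN
  exact Module.finitePresentation_of_surjective (LinearMap.range f).mkQ
    (Submodule.mkQ_surjective _) (by rw [Submodule.ker_mkQ]; exact fg_range' hM f)

lemma fp_coker {A B : ModuleCat.{u} R} (f : A ⟶ B) (hA : Module.FinitePresentation R A)
    (hB : Module.FinitePresentation R B) :
    Module.FinitePresentation R (cokernel f : ModuleCat.{u} R) :=
  fp_equiv' (fp_quot_range hA hB f.hom) (ModuleCat.cokernelIsoRangeQuotient f).symm.toLinearEquiv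

lemma fp_prod' {M N : Type u} [AddCommGroup M] [Module R M] [AddCommGroup N] [Module R N]
    (hM : Module.FinitePresentation R M) (hN : Module.FinitePresentation R N) :
    Module.FinitePresentation R (M × N) := by
  obtain ⟨(L₁ : Type u), _, _, K₁, e₁, hf₁, hfin₁, hK₁⟩ :=
    @Module.FinitePresentation.equiv_quotient R M _ _ _ hM _
  obtain ⟨(L₂ : Type u), _, _, K₂, e₂, hf₂, hfin₂, hK₂⟩ :=
    @Module.FinitePresentation.equiv_quotient R N _ _ _ hN _
  haveI := hf₁; haveI := hfin₁; haveI := hf₂; haveI := hfin₂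
  haveI : Module.FinitePresentation R (L₁ × L₂) :=
    Module.finitePresentation_of_projective R _
  let p₁ : L₁ →ₗ[R] M := (e₁.symm : (L₁ ⧸ K₁) →ₗ[R] M).comp K₁.mkQ
  let p₂ : L₂ →ₗ[R] N := (e₂.symm : (L₂ ⧸ K₂) →ₗ[R] N).comp K₂.mkQ
  have hp₁ : Function.Surjective p₁ := e₁.symm.surjective.comp (Submodule.mkQ_surjective _)
  have hp₂ : Function.Surjective p₂ := e₂.symm.surjective.comp (Submodule.mkQ_surjective _)
  have hk₁ : LinearMap.ker p₁ = K₁ := by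
    rw [LinearMap.ker_comp, LinearMap.ker_eq_bot.mpr e₁.symm.injective, Submodule.comap_bot,
      Submodule.ker_mkQ]
  have hk₂ : LinearMap.ker p₂ = K₂ := by
    rw [LinearMap.ker_comp, LinearMap.ker_eq_bot.mpr e₂.symm.injective, Submodule.comap_bot,
      Submodule.ker_mkQ]
  refine Module.finitePresentation_of_surjective (p₁.prodMap p₂)
    (Function.Surjective.prodMap hp₁ hp₂) ?_
  rw [LinearMap.ker_prodMap, hk₁, hk₂]
  exact Submodule.FG.prod hK₁ hK₂

variable (ρ : SylvesterRankFP R)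

lemma rk_coker_eq {A B : ModuleCat.{u} R} (f : A ⟶ B) (hA : Module.FinitePresentation R A)
    (hB : Module.FinitePresentation R B) :
    ρ.rk (cokernel f) = ρ.rk (ModuleCat.of R (↑B ⧸ LinearMap.range f.hom)) :=
  ρ.rk_iso (fp_coker f hA hB) (fp_quot_range hA hB f.hom) (ModuleCat.cokernelIsoRangeQuotient f)

lemma fp_biprod (A B : ModuleCat.{u} R) (hA : Module.FinitePresentation R A)
    (hB : Module.FinitePresentation R B) :
    Module.FinitePresentation R (A ⊞ B : ModuleCat.{u} R) :=
  fp_equiv' (fp_prod' hA hB) (ModuleCat.biprodIsoProd A B).symm.toLinearEquiv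

lemma rk_subsingleton (M : ModuleCat.{u} R) (hM : Module.FinitePresentation R M)
    [Subsingleton M] : ρ.rk M = 0 := by
  have hMM := fp_biprod M M hM hM
  haveI : Subsingleton ((M ⊞ M : ModuleCat.{u} R) : Type u) :=
    (ModuleCat.biprodIsoProd M M).toLinearEquiv.toEquiv.subsingleton_congr.mpr
      (inferInstanceAs (Subsingleton (↑M × ↑M)))
  have i : (M ⊞ M : ModuleCat.{u} R) ≅ M :=
    { hom := biprod.fst
      inv := biprod.inl
      hom_inv_id := by ext x; exact Subsingleton.elim _ _
      inv_hom_id := by ext x; exact Subsingleton.elim _ _ }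
  have h1 := ρ.rk_biprod M M hM hM
  have h2 := ρ.rk_iso hMM hM i
  omega

lemma rk_coker_epi {A B : ModuleCat.{u} R} (f : A ⟶ B) (hA : Module.FinitePresentation R A)
    (hB : Module.FinitePresentation R B) [Epi f] : ρ.rk (cokernel f) = 0 := by
  rw [rk_coker_eq ρ f hA hB]
  have hsurj : Function.Surjective f := (ModuleCat.epi_iff_surjective f).mp inferInstance
  have hss : Subsingleton (↑B ⧸ LinearMap.range f.hom) := by
    rw [Submodule.Quotient.subsingleton_iff]
    exact LinearMap.range_eq_top.mpr hsurj
  exact @rk_subsingleton R _ ρ _ (fp_quot_range hA hB f.hom) hss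

lemma rk_coker_eq_of_equiv {A B A' B' : ModuleCat.{u} R} (f : A ⟶ B) (g : A' ⟶ B')
    (hA : Module.FinitePresentation R A) (hB : Module.FinitePresentation R B)
    (hA' : Module.FinitePresentation R A') (hB' : Module.FinitePresentation R B')
    (e : (↑B ⧸ LinearMap.range f.hom) ≃ₗ[R] (↑B' ⧸ LinearMap.range g.hom)) :
    ρ.rk (cokernel f) = ρ.rk (cokernel g) := by
  rw [rk_coker_eq ρ f hA hB, rk_coker_eq ρ g hA' hB']
  exact ρ.rk_iso (fp_quot_range hA hB f.hom) (fp_quot_range hA' hB' g.hom) e.toModuleIso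

end Helpers

/-- The set of `ρ`-full maps between finitely presented `R`-modules is a severe right
Ore set: it contains all isomorphisms, is closed under composition and pushouts, and is
severely right revengeful. -/
theorem rhoFull_severe_right_ore {R : Type u} [Ring R] (ρ : SylvesterRankFP R) :
    (∀ ⦃A B : ModuleCat.{u} R⦄,
      Module.FinitePresentation R A → Module.FinitePresentation R B →
      ∀ (f : A ⟶ B), IsIso f → ρ.IsRhoFull f) ∧
    (∀ ⦃A B B' : ModuleCat.{u} R⦄,
      Module.FinitePresentation R A → Module.FinitePresentation R B →
      Module.FinitePresentation R B' →
      ∀ (f : A ⟶ B) (g : B ⟶ B'),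
      ρ.IsRhoFull f → ρ.IsRhoFull g → ρ.IsRhoFull (f ≫ g)) ∧
    (∀ ⦃A B C' : ModuleCat.{u} R⦄,
      Module.FinitePresentation R A → Module.FinitePresentation R B →
      Module.FinitePresentation R C' →
      ∀ (s : A ⟶ B) (a : A ⟶ C'),
      ρ.IsRhoFull s → ρ.IsRhoFull (pushoutAlong s a)) ∧
    (∀ ⦃A B C' : ModuleCat.{u} R⦄,
      Module.FinitePresentation R A → Module.FinitePresentation R B →
      Module.FinitePresentation R C' →
      ∀ (s : A ⟶ B) (a : B ⟶ C'),
      ρ.IsRhoFull s → s ≫ a = 0 → ρ.IsRhoFull (cokernel.π a)) := by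
  refine ⟨?iso, ?comp, ?push, ?sev⟩
  -- Isomorphisms are ρ-full
  case iso =>
    intro A B hA hB f hf
    haveI := hf
    exact ⟨ρ.rk_iso hA hB (asIso f), rk_coker_epi ρ f hA hB⟩
  -- Closed under composition
  case comp =>
    intro A B B' hA hB hB' f g hf hg
    refine ⟨hf.1.trans hg.1, ?_⟩
    -- the induced map on cokernels
    have hmem : ∀ x ∈ LinearMap.range (f.hom : ↑A →ₗ[R] ↑B),
        x ∈ LinearMap.ker ((LinearMap.range (f ≫ g).hom).mkQ.comp (g.hom : ↑B →ₗ[R] ↑B')) := by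
      rintro x ⟨y, rfl⟩
      simp only [LinearMap.mem_ker, LinearMap.comp_apply, Submodule.mkQ_apply]
      exact (Submodule.Quotient.mk_eq_zero _).mpr ⟨y, by simp⟩
    set hmap : (↑B ⧸ LinearMap.range f.hom) →ₗ[R] (↑B' ⧸ LinearMap.range (f ≫ g).hom) :=
      Submodule.liftQ _ ((LinearMap.range (f ≫ g).hom).mkQ.comp (g.hom : ↑B →ₗ[R] ↑B')) hmem with hmap_def
    have hle : LinearMap.range (f ≫ g).hom ≤ LinearMap.range g.hom := by
      rw [ModuleCat.hom_comp]; exact LinearMap.range_comp_le_range _ _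
    have fpQf := fp_quot_range hA hB (f.hom : ↑A →ₗ[R] ↑B)
    have fpQfg := fp_quot_range hA hB' ((f ≫ g).hom : ↑A →ₗ[R] ↑B')
    have key : ρ.rk (cokernel (ModuleCat.ofHom hmap)) = ρ.rk (cokernel g) := by
      refine rk_coker_eq_of_equiv ρ (ModuleCat.ofHom hmap) g fpQf fpQfg hB hB' ?_
      refine (Submodule.quotEquivOfEq _ _ ?_).trans
        (Submodule.quotientQuotientEquivQuotient (LinearMap.range (f ≫ g).hom)
          (LinearMap.range g.hom) hle)
      show LinearMap.range hmap = _
      rw [hmap_def, Submodule.range_liftQ, LinearMap.range_comp]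
    have hineq := ρ.rk_le (ModuleCat.ofHom hmap) fpQf fpQfg
    rw [← rk_coker_eq ρ (f ≫ g) hA hB', ← rk_coker_eq ρ f hA hB, key, hf.2, hg.2] at hineq
    omega
  -- Closed under pushouts
  case push =>
    intro A B C' hA hB hC' s a hs
    set Lhom : A ⟶ ModuleCat.of R (↑B × ↑C') :=
      ModuleCat.ofHom (LinearMap.prod s.hom a.hom : ↑A →ₗ[R] ↑B × ↑C') with Lhom_def
    have fpP : Module.FinitePresentation R (ModuleCat.of R (↑B × ↑C')) := fp_prod' hB hC'
    have fpBi := fp_biprod B C' hB hC'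
    have w₁ : biprod.lift s a ≫ (ModuleCat.biprodIsoProd B C').hom = Lhom := by
      rw [← Iso.eq_comp_inv]
      apply biprod.hom_ext
      · rw [Category.assoc, ModuleCat.biprodIsoProd_inv_comp_fst, biprod.lift_fst]
        ext x; rfl
      · rw [Category.assoc, ModuleCat.biprodIsoProd_inv_comp_snd, biprod.lift_snd]
        ext x; rfl
    have w₂ : (biprod.inr : C' ⟶ B ⊞ C') ≫ (ModuleCat.biprodIsoProd B C').hom =
        ModuleCat.ofHom (LinearMap.inr R ↑B ↑C' : ↑C' →ₗ[R] ↑B × ↑C') := by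
      rw [← Iso.eq_comp_inv]
      apply biprod.hom_ext
      · rw [Category.assoc, ModuleCat.biprodIsoProd_inv_comp_fst, biprod.inr_fst]
        ext x; rfl
      · rw [Category.assoc, ModuleCat.biprodIsoProd_inv_comp_snd, biprod.inr_snd]
        ext x; rfl
    have wβ : biprod.lift s a ≫ (ModuleCat.biprodIsoProd B C').hom =
        (Iso.refl A).hom ≫ Lhom := by
      rw [w₁, Iso.refl_hom, Category.id_comp]
    -- the concrete replacement for pushoutAlong
    set mhom : C' ⟶ ModuleCat.of R ((↑B × ↑C') ⧸ LinearMap.range Lhom.hom) :=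
      ModuleCat.ofHom (((LinearMap.range Lhom.hom).mkQ.comp (LinearMap.inr R ↑B ↑C')) :
        ↑C' →ₗ[R] (↑B × ↑C') ⧸ LinearMap.range Lhom.hom) with mhom_def
    have w₃ : pushoutAlong s a ≫
        (cokernel.mapIso (biprod.lift s a) Lhom (Iso.refl A) (ModuleCat.biprodIsoProd B C') wβ ≪≫
          ModuleCat.cokernelIsoRangeQuotient Lhom).hom = (Iso.refl C').hom ≫ mhom := by
      show (biprod.inr ≫ cokernel.π (biprod.lift s a)) ≫ _ = _
      rw [Iso.trans_hom, cokernel.mapIso_hom, Category.assoc, cokernel.π_desc_assoc,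
        Category.assoc, ModuleCat.cokernel_π_cokernelIsoRangeQuotient_hom, ← Category.assoc, w₂]
      ext x; rfl
    have iso₂ : (cokernel (pushoutAlong s a) : ModuleCat.{u} R) ≅ cokernel mhom :=
      cokernel.mapIso _ _ (Iso.refl C')
        (cokernel.mapIso (biprod.lift s a) Lhom (Iso.refl A) (ModuleCat.biprodIsoProd B C') wβ ≪≫
          ModuleCat.cokernelIsoRangeQuotient Lhom) w₃
    have fpD := fp_coker (biprod.lift s a) hA fpBi
    have fpQL : Module.FinitePresentation R ((↑B × ↑C') ⧸ LinearMap.range Lhom.hom) :=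
      fp_quot_range hA fpP (Lhom.hom : ↑A →ₗ[R] ↑B × ↑C')
    -- concrete quotient computation: cokernel of mhom ≃ cokernel of s
    have hq : Function.Surjective
        ((LinearMap.range (s.hom : ↑A →ₗ[R] ↑B)).mkQ.comp (LinearMap.fst R ↑B ↑C')) :=
      (Submodule.mkQ_surjective _).comp Prod.fst_surjective
    have hker : LinearMap.ker ((LinearMap.range (s.hom : ↑A →ₗ[R] ↑B)).mkQ.comp
          (LinearMap.fst R ↑B ↑C')) =
        LinearMap.range Lhom.hom ⊔ LinearMap.range (LinearMap.inr R ↑B ↑C') := by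
      ext ⟨b, c⟩
      simp only [LinearMap.mem_ker, LinearMap.comp_apply, LinearMap.fst_apply,
        Submodule.mkQ_apply, Submodule.Quotient.mk_eq_zero]
      constructor
      · rintro ⟨x, hx⟩
        refine Submodule.mem_sup.mpr ⟨(s.hom x, a.hom x), ⟨x, rfl⟩, (0, c - a.hom x),
          ⟨c - a.hom x, rfl⟩, ?_⟩
        rw [Prod.mk_add_mk, add_zero, hx, add_sub_cancel]
      · rintro h
        obtain ⟨u, ⟨x, rfl⟩, v, ⟨z, rfl⟩, huv⟩ := Submodule.mem_sup.mp h
        have : b = s.hom x := by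
          have hb : b = (Lhom.hom x).1 + ((LinearMap.inr R ↑B ↑C') z).1 :=
            congrArg Prod.fst huv.symm
          exact hb.trans (add_zero (s.hom x))
        exact this ▸ ⟨x, rfl⟩
    have key : ρ.rk (cokernel mhom) = ρ.rk (cokernel s) := by
      refine rk_coker_eq_of_equiv ρ mhom s hC' fpQL hA hB ?_
      have hr : LinearMap.range mhom.hom =
          (LinearMap.range Lhom.hom ⊔ LinearMap.range (LinearMap.inr R ↑B ↑C')).map
            (LinearMap.range Lhom.hom).mkQ := by
        rw [Submodule.map_sup, Submodule.mkQ_map_self, bot_sup_eq, mhom_def, ModuleCat.hom_ofHom, ModuleCat.hom_ofHom,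
          LinearMap.range_comp]
      exact (Submodule.quotEquivOfEq _ _ hr) ≪≫ₗ
        (Submodule.quotientQuotientEquivQuotient _ _ le_sup_left) ≪≫ₗ
        (Submodule.quotEquivOfEq _ _ hker.symm) ≪≫ₗ
        LinearMap.quotKerEquivOfSurjective _ hq
    have rkCokerPush : ρ.rk (cokernel (pushoutAlong s a)) = 0 := by
      have := ρ.rk_iso (fp_coker (pushoutAlong s a) hC' fpD)
        (fp_coker mhom hC' fpQL) iso₂
      rw [this, key, hs.2]
    have h1 := ρ.rk_le (biprod.lift s a) hA fpBi
    have h2 := ρ.rk_biprod B C' hB hC'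
    have h3 := ρ.rk_le (pushoutAlong s a) hC' fpD
    rw [rkCokerPush] at h3
    have hs1 := hs.1
    exact ⟨by omega, rkCokerPush⟩
  -- Severely right revengeful
  case sev =>
    intro A B C' hA hB hC' s a hs w
    have fpQs := fp_quot_range hA hB (s.hom : ↑A →ₗ[R] ↑B)
    have hmem : ∀ x ∈ LinearMap.range (s.hom : ↑A →ₗ[R] ↑B),
        x ∈ LinearMap.ker (a.hom : ↑B →ₗ[R] ↑C') := by
      rintro x ⟨y, rfl⟩
      have : (s ≫ a) y = (0 : A ⟶ C') y := by rw [w]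
      simpa using this
    set abar : ModuleCat.of R (↑B ⧸ LinearMap.range s.hom) ⟶ C' :=
      ModuleCat.ofHom (Submodule.liftQ _ (a.hom : ↑B →ₗ[R] ↑C') hmem) with abar_def
    have key : ρ.rk (cokernel abar) = ρ.rk (cokernel a) := by
      refine rk_coker_eq_of_equiv ρ abar a fpQs hC' hB hC' ?_
      refine Submodule.quotEquivOfEq _ _ ?_
      show LinearMap.range (Submodule.liftQ _ _ hmem) = _
      rw [Submodule.range_liftQ]
    have h1 := ρ.rk_le abar fpQs hC'
    rw [key, ← rk_coker_eq ρ s hA hB, hs.2] at h1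
    have h2 := ρ.rk_coker_le a hB hC'
    refine ⟨by omega, ?_⟩
    exact rk_coker_epi ρ (cokernel.π a) hC' (fp_coker a hB hC')
end

section
/- Let ρ be a Sylvester rank function on the category of finitely presented right R-modules with ρ(R) = 1. Then for every finitely presented module M with ρ(M) = m, there exists a ρ-full map from R^m to M. -/
open CategoryTheory CategoryTheory.Limits

universe u

namespace SylvAux

variable {R : Type u} [Ring R]

lemma fp_equiv {A B : Type u} [AddCommGroup A] [Module R A] [AddCommGroup B] [Module R B]
    (hA : Module.FinitePresentation R A) (e : A ≃ₗ[R] B) : Module.FinitePresentation R B := by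
  haveI := hA
  refine Module.finitePresentation_of_surjective e.toLinearMap e.surjective ?_
  rw [LinearEquiv.ker]
  exact Submodule.fg_bot

lemma fp_prod {A B : Type u} [AddCommGroup A] [Module R A] [AddCommGroup B] [Module R B]
    (hA : Module.FinitePresentation R A) (hB : Module.FinitePresentation R B) :
    Module.FinitePresentation R (A × B) := by
  haveI := hA; haveI := hB
  obtain ⟨a, f, hf⟩ := Module.Finite.exists_fin' R A
  obtain ⟨b, g, hg⟩ := Module.Finite.exists_fin' R B
  haveI : Module.FinitePresentation R ((Fin a → R) × (Fin b → R)) :=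
    fp_equiv inferInstance (LinearEquiv.sumArrowLequivProdArrow (Fin a) (Fin b) R R)
  refine Module.finitePresentation_of_surjective (f.prodMap g) ?_ ?_
  · rintro ⟨x, y⟩
    obtain ⟨x', hx⟩ := hf x
    obtain ⟨y', hy⟩ := hg y
    exact ⟨(x', y'), by simp [hx, hy]⟩
  · rw [LinearMap.ker_prodMap]
    exact (Module.FinitePresentation.fg_ker f hf).prod (Module.FinitePresentation.fg_ker g hg)

lemma fp_quot {A : Type u} [AddCommGroup A] [Module R A] (hA : Module.FinitePresentation R A)
    (N : Submodule R A) (hN : N.FG) : Module.FinitePresentation R (A ⧸ N) := by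
  haveI := hA
  exact Module.finitePresentation_of_surjective N.mkQ N.mkQ_surjective
    (by rwa [Submodule.ker_mkQ])

variable (ρ : SylvesterRankFP R)

lemma rk_eq {A B : Type u} [AddCommGroup A] [Module R A] [AddCommGroup B] [Module R B]
    (hA : Module.FinitePresentation R A) (hB : Module.FinitePresentation R B) (e : A ≃ₗ[R] B) :
    ρ.rk (ModuleCat.of R A) = ρ.rk (ModuleCat.of R B) :=
  ρ.rk_iso hA hB e.toModuleIso

lemma fp_biprod (A B : ModuleCat.{u} R) (hA : Module.FinitePresentation R A)
    (hB : Module.FinitePresentation R B) : Module.FinitePresentation R ↑(A ⊞ B) :=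
  fp_equiv (fp_prod hA hB) (ModuleCat.biprodIsoProd A B).toLinearEquiv.symm

lemma rk_prod {A B : Type u} [AddCommGroup A] [Module R A] [AddCommGroup B] [Module R B]
    (hA : Module.FinitePresentation R A) (hB : Module.FinitePresentation R B) :
    ρ.rk (ModuleCat.of R (A × B)) = ρ.rk (ModuleCat.of R A) + ρ.rk (ModuleCat.of R B) := by
  rw [← ρ.rk_biprod (ModuleCat.of R A) (ModuleCat.of R B) hA hB]
  exact ρ.rk_iso (fp_prod hA hB) (fp_biprod _ _ hA hB)
    (ModuleCat.biprodIsoProd (ModuleCat.of R A) (ModuleCat.of R B)).symm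

lemma rk_zero {A : Type u} [AddCommGroup A] [Module R A] [Subsingleton A]
    (hA : Module.FinitePresentation R A) : ρ.rk (ModuleCat.of R A) = 0 := by
  have h1 := rk_prod ρ hA hA
  have h2 := rk_eq ρ (fp_prod hA hA) hA
    (LinearEquiv.ofSubsingleton (A × A) A)
  omega

lemma rk_pi (hR : ρ.rk (ModuleCat.of R R) = 1) :
    ∀ n, ρ.rk (ModuleCat.of R (Fin n → R)) = n
  | 0 => rk_zero ρ inferInstance
  | (n+1) => by
    have e : (Fin (n+1) → R) ≃ₗ[R] (Fin n → R) × R :=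
      (LinearEquiv.funCongrLeft R R finSumFinEquiv).trans
        ((LinearEquiv.sumArrowLequivProdArrow _ _ R R).trans
          ((LinearEquiv.refl R _).prodCongr (LinearEquiv.funUnique (Fin 1) R R)))
    rw [rk_eq ρ inferInstance (fp_prod inferInstance inferInstance) e,
      rk_prod ρ inferInstance inferInstance, rk_pi hR n, hR]

lemma rk_cokernel {A B : ModuleCat.{u} R} (f : A ⟶ B) {C : Type u} [AddCommGroup C] [Module R C]
    (hC : Module.FinitePresentation R C) (e : (↑B ⧸ LinearMap.range f.hom) ≃ₗ[R] C) :
    ρ.rk (cokernel f) = ρ.rk (ModuleCat.of R C) := by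
  have hcoker : Module.FinitePresentation R ↑(cokernel f) :=
    fp_equiv hC (e.symm.trans (ModuleCat.cokernelIsoRangeQuotient f).symm.toLinearEquiv)
  exact ρ.rk_iso hcoker hC ((ModuleCat.cokernelIsoRangeQuotient f) ≪≫ e.toModuleIso)

variable {M : Type u} [AddCommGroup M] [Module R M]

/-- rank of the quotient `M ⧸ N`. -/
def qrk (ρ : SylvesterRankFP R) (N : Submodule R M) : ℕ :=
  ρ.rk (ModuleCat.of R (M ⧸ N))

/-- the map `R → M ⧸ N` sending `1` to the class of `x`, as a morphism in `ModuleCat`. -/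
def sMap (N : Submodule R M) (x : M) : ModuleCat.of R R ⟶ ModuleCat.of R (M ⧸ N) :=
  ModuleCat.ofHom (LinearMap.toSpanSingleton R (M ⧸ N) (Submodule.Quotient.mk x))

lemma range_sMap (N : Submodule R M) (x : M) :
    LinearMap.range (sMap N x).hom = (N ⊔ Submodule.span R {x}).map N.mkQ := by
  rw [Submodule.map_sup, Submodule.map_span, Set.image_singleton, Submodule.mkQ_map_self,
    bot_sup_eq, Submodule.mkQ_apply]
  exact (LinearMap.span_singleton_eq_range R _ _).symm

noncomputable def quotRangeSMapEquiv (N : Submodule R M) (x : M) :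
    ((M ⧸ N) ⧸ LinearMap.range (sMap N x).hom) ≃ₗ[R] M ⧸ (N ⊔ Submodule.span R {x}) :=
  (Submodule.quotEquivOfEq _ _ (range_sMap N x)).trans
    (Submodule.quotientQuotientEquivQuotient N (N ⊔ Submodule.span R {x}) le_sup_left)

variable (ρ : SylvesterRankFP R)

lemma qrk_sup_le (hM : Module.FinitePresentation R M) (N : Submodule R M) (hN : N.FG) (x : M) :
    qrk ρ (N ⊔ Submodule.span R {x}) ≤ qrk ρ N := by
  have h := ρ.rk_coker_le (sMap N x) (inferInstance : Module.FinitePresentation R R) (fp_quot hM N hN)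
  rwa [rk_cokernel ρ (sMap N x)
    (fp_quot hM _ (hN.sup (Submodule.fg_span_singleton x))) (quotRangeSMapEquiv N x)] at h

lemma qrk_le_sup (hR : ρ.rk (ModuleCat.of R R) = 1) (hM : Module.FinitePresentation R M)
    (N : Submodule R M) (hN : N.FG) (x : M) :
    qrk ρ N ≤ 1 + qrk ρ (N ⊔ Submodule.span R {x}) := by
  have h := ρ.rk_le (sMap N x) (inferInstance : Module.FinitePresentation R R) (fp_quot hM N hN)
  rwa [rk_cokernel ρ (sMap N x)
    (fp_quot hM _ (hN.sup (Submodule.fg_span_singleton x))) (quotRangeSMapEquiv N x), hR] at h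


lemma qrk_submod (hM : Module.FinitePresentation R M) (N : Submodule R M) (hN : N.FG) (x y : M) :
    qrk ρ (N ⊔ Submodule.span R {x}) + qrk ρ (N ⊔ Submodule.span R {y}) ≤
      qrk ρ N + qrk ρ (N ⊔ Submodule.span R {x} ⊔ Submodule.span R {y}) := by
  set N1 := N ⊔ Submodule.span R {x} with hN1
  set N2 := N ⊔ Submodule.span R {y} with hN2
  set N3 := N1 ⊔ Submodule.span R {y} with hN3
  have hN1fg : N1.FG := hN.sup (Submodule.fg_span_singleton x)
  have hN2fg : N2.FG := hN.sup (Submodule.fg_span_singleton y)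
  have hN3fg : N3.FG := hN1fg.sup (Submodule.fg_span_singleton y)
  have hle1 : N ≤ Submodule.comap LinearMap.id N1 := by
    rw [Submodule.comap_id]; exact le_sup_left
  have hle2 : N ≤ Submodule.comap LinearMap.id N2 := by
    rw [Submodule.comap_id]; exact le_sup_left
  have hle13 : N1 ≤ Submodule.comap LinearMap.id N3 := by
    rw [Submodule.comap_id]; exact le_sup_left
  have hle23 : N2 ≤ Submodule.comap LinearMap.id N3 := by
    rw [Submodule.comap_id, hN3, hN1, sup_assoc, sup_comm (Submodule.span R {x})]
    exact sup_le le_sup_left (le_sup_of_le_right le_sup_left)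
  let q1 : (M ⧸ N) →ₗ[R] M ⧸ N1 := Submodule.mapQ N N1 LinearMap.id hle1
  let q2 : (M ⧸ N) →ₗ[R] M ⧸ N2 := Submodule.mapQ N N2 LinearMap.id hle2
  let q13 : (M ⧸ N1) →ₗ[R] M ⧸ N3 := Submodule.mapQ N1 N3 LinearMap.id hle13
  let q23 : (M ⧸ N2) →ₗ[R] M ⧸ N3 := Submodule.mapQ N2 N3 LinearMap.id hle23
  let g : ModuleCat.of R (M ⧸ N) ⟶ ModuleCat.of R ((M ⧸ N1) × (M ⧸ N2)) := ModuleCat.ofHom (q1.prod q2)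
  let h : ((M ⧸ N1) × (M ⧸ N2)) →ₗ[R] M ⧸ N3 :=
    q13 ∘ₗ LinearMap.fst R (M ⧸ N1) (M ⧸ N2) - q23 ∘ₗ LinearMap.snd R (M ⧸ N1) (M ⧸ N2)
  have hsurj : Function.Surjective h := by
    intro z
    obtain ⟨mm, rfl⟩ := N3.mkQ_surjective z
    refine ⟨(N1.mkQ mm, 0), ?_⟩
    show q13 (N1.mkQ mm) - q23 0 = N3.mkQ mm
    rw [map_zero, sub_zero]
    rfl
  have hker : LinearMap.range g.hom = LinearMap.ker h := by
    apply le_antisymm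
    · rintro _ ⟨u, rfl⟩
      obtain ⟨mm, rfl⟩ := N.mkQ_surjective u
      exact sub_self (N3.mkQ mm)
    · rintro ⟨a, b⟩ hab
      obtain ⟨m1, rfl⟩ := N1.mkQ_surjective a
      obtain ⟨m2, rfl⟩ := N2.mkQ_surjective b
      have hmem : m1 - m2 ∈ N3 := by
        have h0 : N3.mkQ m1 - N3.mkQ m2 = 0 := hab
        rw [← map_sub, Submodule.mkQ_apply, Submodule.Quotient.mk_eq_zero] at h0
        exact h0
      rw [hN3, hN1] at hmem
      obtain ⟨p, hp, v, hv, hpv⟩ := Submodule.mem_sup.1 hmem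
      obtain ⟨n, hn, uu, hu, rfl⟩ := Submodule.mem_sup.1 hp
      refine ⟨N.mkQ (m1 - n - uu), ?_⟩
      have e1 : N1.mkQ (m1 - n - uu) = N1.mkQ m1 := by
        rw [Submodule.mkQ_apply, Submodule.mkQ_apply, Submodule.Quotient.eq]
        have hh : m1 - n - uu - m1 = -(n + uu) := by abel
        rw [hh]
        exact neg_mem (add_mem (Submodule.mem_sup_left hn) (Submodule.mem_sup_right hu))
      have e2 : N2.mkQ (m1 - n - uu) = N2.mkQ m2 := by
        rw [Submodule.mkQ_apply, Submodule.mkQ_apply, Submodule.Quotient.eq]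
        have hv' : v = m1 - m2 - (n + uu) := by rw [← hpv]; abel
        have hh : m1 - n - uu - m2 = v := by rw [hv']; abel
        rw [hh]
        exact Submodule.mem_sup_right hv
      have hg : g.hom (N.mkQ (m1 - n - uu)) =
          (N1.mkQ (m1 - n - uu), N2.mkQ (m1 - n - uu)) := rfl
      rw [hg, e1, e2]
  have hfp1 := fp_quot hM N1 hN1fg
  have hfp2 := fp_quot hM N2 hN2fg
  have hcoker : ρ.rk (cokernel g) = qrk ρ N3 :=
    rk_cokernel ρ g (fp_quot hM N3 hN3fg)
      ((Submodule.quotEquivOfEq _ _ hker).trans (h.quotKerEquivOfSurjective hsurj))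
  have hle := ρ.rk_le g (fp_quot hM N hN) (fp_prod hfp1 hfp2)
  rw [hcoker, rk_prod ρ hfp1 hfp2] at hle
  exact hle

variable (R) in
/-- The span of the elements of a list. -/
def sp (xs : List M) : Submodule R M := Submodule.span R {a | a ∈ xs}

lemma sp_nil : sp R ([] : List M) = ⊥ := by
  have : {a | a ∈ ([] : List M)} = (∅ : Set M) := by simp
  rw [sp, this, Submodule.span_empty]

lemma sp_cons (x : M) (t : List M) :
    sp R (x :: t) = Submodule.span R {x} ⊔ sp R t := by
  have : {a | a ∈ x :: t} = insert x {a | a ∈ t} := by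
    ext a; simp [List.mem_cons]
  rw [sp, this, Submodule.span_insert, sp]

lemma sp_fg (xs : List M) : (sp R xs).FG :=
  Submodule.fg_span xs.finite_toSet

lemma red_pers (hM : Module.FinitePresentation R M) (x : M) :
    ∀ (ys : List M) (N : Submodule R M), N.FG →
      qrk ρ (N ⊔ Submodule.span R {x}) = qrk ρ N →
      qrk ρ (N ⊔ sp R ys ⊔ Submodule.span R {x}) = qrk ρ (N ⊔ sp R ys)
  | [], N, hN, h => by rwa [sp_nil, sup_bot_eq]
  | (y :: t), N, hN, h => by
    have h1 : qrk ρ (N ⊔ Submodule.span R {y} ⊔ Submodule.span R {x}) =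
        qrk ρ (N ⊔ Submodule.span R {y}) := by
      refine le_antisymm
        (qrk_sup_le ρ hM _ (hN.sup (Submodule.fg_span_singleton y)) x) ?_
      have hs := qrk_submod ρ hM N hN x y
      rw [h] at hs
      have hsw : N ⊔ Submodule.span R {x} ⊔ Submodule.span R {y} =
          N ⊔ Submodule.span R {y} ⊔ Submodule.span R {x} := by
        rw [sup_assoc, sup_assoc, sup_comm (Submodule.span R {x})]
      rw [hsw] at hs
      omega
    have hrec := red_pers hM x t (N ⊔ Submodule.span R {y})
      (hN.sup (Submodule.fg_span_singleton y)) h1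
    rw [sp_cons, ← sup_assoc]
    exact hrec

lemma main_ind (hR : ρ.rk (ModuleCat.of R R) = 1) (hM : Module.FinitePresentation R M) :
    ∀ (xs : List M) (N : Submodule R M), N.FG → qrk ρ (N ⊔ sp R xs) = 0 →
      ∃ ys : List M, ys.length = qrk ρ N ∧ qrk ρ (N ⊔ sp R ys) = 0
  | [], N, hN, h0 => by
    rw [sp_nil, sup_bot_eq] at h0
    exact ⟨[], by simp [h0], by rwa [sp_nil, sup_bot_eq]⟩
  | (x :: t), N, hN, h0 => by
    have hN' : (N ⊔ Submodule.span R {x}).FG := hN.sup (Submodule.fg_span_singleton x)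
    have h0' : qrk ρ (N ⊔ Submodule.span R {x} ⊔ sp R t) = 0 := by
      rwa [sp_cons, ← sup_assoc] at h0
    obtain ⟨ys, hlen, hz⟩ := main_ind hR hM t (N ⊔ Submodule.span R {x}) hN' h0'
    have hle := qrk_sup_le ρ hM N hN x
    have hge := qrk_le_sup ρ hR hM N hN x
    rcases eq_or_lt_of_le hle with heq | hlt
    · have hred := red_pers ρ hM x ys N hN heq
      refine ⟨ys, hlen.trans heq, ?_⟩
      have hsw : N ⊔ Submodule.span R {x} ⊔ sp R ys = N ⊔ sp R ys ⊔ Submodule.span R {x} := by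
        rw [sup_assoc, sup_assoc, sup_comm (Submodule.span R {x})]
      rw [hsw] at hz
      omega
    · refine ⟨x :: ys, ?_, ?_⟩
      · simp only [List.length_cons, hlen]
        omega
      · rwa [sp_cons, ← sup_assoc]
end SylvAux

open SylvAux in
/-- Let `ρ` be a Sylvester rank function on finitely presented right `R`-modules with
`ρ(R) = 1`.  Then for every finitely presented module `M` with `ρ(M) = m` there exists a
`ρ`-full map `R^m ⟶ M`. -/
theorem exists_rhoFull_from_free {R : Type u} [Ring R] (ρ : SylvesterRankFP R)
    (hR : ρ.rk (ModuleCat.of R R) = 1)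
    (M : ModuleCat.{u} R) (hM : Module.FinitePresentation R M)
    (m : ℕ) (hm : ρ.rk M = m) :
    ∃ φ : ModuleCat.of R (Fin m → R) ⟶ M, ρ.IsRhoFull φ := by
  classical
  obtain ⟨s, hs⟩ := (Module.finite_def.1 (inferInstance : Module.Finite R M))
  have hsp : sp R s.toList = (⊤ : Submodule R M) := by
    rw [sp]
    have : {a | a ∈ s.toList} = (↑s : Set M) := by ext a; simp
    rw [this, hs]
  haveI hss : Subsingleton (↑M ⧸ (⊤ : Submodule R ↑M)) := by
    refine ⟨fun a b => ?_⟩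
    obtain ⟨a, rfl⟩ := (⊤ : Submodule R ↑M).mkQ_surjective a
    obtain ⟨b, rfl⟩ := (⊤ : Submodule R ↑M).mkQ_surjective b
    rw [Submodule.mkQ_apply, Submodule.mkQ_apply, Submodule.Quotient.eq]
    trivial
  have htop : qrk ρ ((⊥ : Submodule R ↑M) ⊔ sp R s.toList) = 0 := by
    rw [bot_sup_eq, hsp]
    exact rk_zero ρ (fp_quot hM ⊤ (Module.Finite.fg_top (R := R) (M := ↑M)))
  obtain ⟨ys, hlen, hz⟩ := main_ind ρ hR hM s.toList ⊥ Submodule.fg_bot htop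
  have hbot : qrk ρ (⊥ : Submodule R ↑M) = m := by
    rw [qrk, rk_eq ρ (fp_quot hM ⊥ Submodule.fg_bot) hM (Submodule.quotEquivOfEqBot ⊥ rfl)]
    exact hm
  rw [hbot] at hlen
  rw [bot_sup_eq] at hz
  let c : Fin m → ↑M := fun i => ys.get (finCongr hlen.symm i)
  let φ : (Fin m → R) →ₗ[R] ↑M := Fintype.linearCombination R c
  have hrange : LinearMap.range φ = sp R ys := by
    rw [sp]
    have h1 : Set.range c = Set.range ys.get :=
      Function.Surjective.range_comp (finCongr hlen.symm).surjective ys.get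
    have h2 : Set.range ys.get = {a | a ∈ ys} := by
      ext a; simp [List.mem_iff_get]
    rw [show LinearMap.range φ = Submodule.span R (Set.range c) from
      Fintype.range_linearCombination R c, h1, h2]
  refine ⟨ModuleCat.ofHom φ, ?_, ?_⟩
  · rw [show ρ.rk (ModuleCat.of R (Fin m → R)) = m from rk_pi ρ hR m, hm]
  · rw [rk_cokernel ρ (show ModuleCat.of R (Fin m → R) ⟶ M from ModuleCat.ofHom φ)
      (fp_quot hM (sp R ys) (sp_fg ys))
      (Submodule.quotEquivOfEq _ _ hrange)]
    exact hz
end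

section
/- Let R be a ring and D a division ring. Any right exact additive functor φ from finitely presented right R-modules to finite-dimensional right D-vector spaces gives rise to a Sylvester rank function via ρ(A) = dim_D φ(A): ρ is additive on direct sums and satisfies ρ(C) ≤ ρ(B) ≤ ρ(A) + ρ(C) for every exact sequence A → B → C → 0. -/
open CategoryTheory CategoryTheory.Limits

universe u

/-- Let `D` be a division ring and `Φ` a right exact additive functor from finitely
presented right `R`-modules to finite-dimensional `D`-vector spaces.  Then
`ρ(A) = dim_D Φ(A)` is a Sylvester rank function: it is additive on direct sums and
satisfies `ρ(coker f) ≤ ρ(B) ≤ ρ(A) + ρ(coker f)` for every map `f : A ⟶ B`, i.e.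
`ρ(C) ≤ ρ(B) ≤ ρ(A) + ρ(C)` for every exact sequence `A → B → C → 0`. -/
theorem sylvester_of_right_exact_to_vec
    {R : Type u} [Ring R] {D : Type u} [DivisionRing D]
    (Φ : ModuleCat.{u} R ⥤ ModuleCat.{u} D) [Φ.Additive]
    (hfin : ∀ (M : ModuleCat.{u} R), Module.FinitePresentation R M →
      Module.Finite D (Φ.obj M))
    (hre : ∀ ⦃A B : ModuleCat.{u} R⦄ (f : A ⟶ B),
      Module.FinitePresentation R A → Module.FinitePresentation R B →
      Nonempty (IsColimit (CokernelCofork.ofπ (f := Φ.map f) (Φ.map (cokernel.π f))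
        (by rw [← Φ.map_comp, cokernel.condition, Functor.map_zero])))) :
    (∀ (A B : ModuleCat.{u} R), Module.FinitePresentation R A →
      Module.FinitePresentation R B →
      Module.finrank D (Φ.obj (A ⊞ B)) =
        Module.finrank D (Φ.obj A) + Module.finrank D (Φ.obj B)) ∧
    (∀ ⦃A B : ModuleCat.{u} R⦄ (f : A ⟶ B),
      Module.FinitePresentation R A → Module.FinitePresentation R B →
      Module.finrank D (Φ.obj (cokernel f)) ≤ Module.finrank D (Φ.obj B) ∧
      Module.finrank D (Φ.obj B) ≤
        Module.finrank D (Φ.obj A) + Module.finrank D (Φ.obj (cokernel f))) := by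
  haveI : PreservesBinaryBiproducts Φ := preservesBinaryBiproducts_of_preservesBiproducts Φ
  constructor
  · intro A B hA hB
    have : Module.Finite D (Φ.obj A) := hfin A hA
    have : Module.Finite D (Φ.obj B) := hfin B hB
    have e : Φ.obj (A ⊞ B) ≅ ModuleCat.of D (Φ.obj A × Φ.obj B) :=
      Φ.mapBiprod A B ≪≫ ModuleCat.biprodIsoProd _ _
    rw [e.toLinearEquiv.finrank_eq]
    exact Module.finrank_prod
  · intro A B f hA hB
    have w : Φ.map f ≫ Φ.map (cokernel.π f) = 0 := by
      rw [← Φ.map_comp, cokernel.condition, Functor.map_zero]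
    obtain ⟨hc⟩ := hre f hA hB
    have hex : (ShortComplex.mk (Φ.map f) (Φ.map (cokernel.π f)) w).Exact :=
      ShortComplex.exact_of_g_is_cokernel _ hc
    have hepi : Epi (Φ.map (cokernel.π f)) := epi_of_isColimit_cofork hc
    have hsurj : Function.Surjective (Φ.map (cokernel.π f)) :=
      (ModuleCat.epi_iff_surjective _).mp hepi
    have hker : LinearMap.range (Φ.map f).hom = LinearMap.ker (Φ.map (cokernel.π f)).hom :=
      (ShortComplex.mk (Φ.map f) (Φ.map (cokernel.π f)) w).moduleCat_exact_iff_range_eq_ker.mp hex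
    have : Module.Finite D (Φ.obj A) := hfin A hA
    have : Module.Finite D (Φ.obj B) := hfin B hB
    have hrn := LinearMap.finrank_range_add_finrank_ker
      ((Φ.map (cokernel.π f)).hom : Φ.obj B →ₗ[D] Φ.obj (cokernel f))
    rw [LinearMap.range_eq_top.mpr hsurj, finrank_top, ← hker] at hrn
    have hle := LinearMap.finrank_range_le ((Φ.map f).hom : Φ.obj A →ₗ[D] Φ.obj B)
    omega
end

section
/- Let σ be a right Ore set in a small additive category A with cokernels. If b : B → C is the cokernel of a : A → B in A, then the image of b in the localized category A_σ is the cokernel of the image of a. Consequently A_σ has cokernels and the localization functor A → A_σ is right exact. -/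
open CategoryTheory CategoryTheory.Limits

universe v v' u u'

/-- Let `σ` (here `W`) be a right Ore set in an additive category `C` with cokernels:
it contains all isomorphisms, is closed under composition, has common right multiples,
and is right revengeful.  Let `L : C ⥤ D` be the localization of `C` at `W` (which is an
additive category).  Then the image under `L` of the cokernel map of any `a : A ⟶ B` is
again a cokernel of `L.map a`; consequently the localized category has cokernels and the
localization functor is right exact. -/
theorem localization_right_exact_and_hasCokernels
    {C : Type u} [Category.{v} C] [Preadditive C] [HasCokernels C]
    (W : MorphismProperty C) [W.IsMultiplicative]
    (hiso : ∀ ⦃A B : C⦄ (f : A ⟶ B), IsIso f → W f)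
    (hore : ∀ ⦃A B C' : C⦄ (s : A ⟶ B) (_ : W s) (a : A ⟶ C'),
      ∃ (D' : C) (t : C' ⟶ D') (_ : W t) (b : B ⟶ D'), a ≫ t = s ≫ b)
    (hrev : ∀ ⦃A B C' : C⦄ (s : A ⟶ B) (a : B ⟶ C'), W s → s ≫ a = 0 →
      ∃ (D' : C) (t : C' ⟶ D'), W t ∧ a ≫ t = 0)
    {D : Type u'} [Category.{v'} D] (L : C ⥤ D) [L.IsLocalization W]
    [Preadditive D] [L.Additive] :
    HasCokernels D ∧
    ∀ ⦃A B : C⦄ (a : A ⟶ B),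
      Nonempty (IsColimit (CokernelCofork.ofπ (f := L.map a) (L.map (cokernel.π a))
        (by rw [← L.map_comp, cokernel.condition, Functor.map_zero]))) := by
  have hW : W.IsInvertedBy L := Localization.inverts L W
  haveI : L.EssSurj := Localization.essSurj L W
  haveI : W.HasLeftCalculusOfFractions := by
    constructor
    · intro X Y φ
      obtain ⟨D', t, ht, b, h⟩ := hore φ.s φ.hs φ.f
      exact ⟨⟨b, t, ht⟩, h⟩
    · intro X' X Y f₁ f₂ s hs h
      obtain ⟨D', t, ht, h0⟩ := hrev s (f₁ - f₂) hs
        (by rw [Preadditive.comp_sub, h, sub_self])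
      exact ⟨D', t, ht, by rwa [← sub_eq_zero, ← Preadditive.sub_comp]⟩
  -- if `L.map f = 0` in `D` then `f` is killed by some `s ∈ W`
  have hzero : ∀ ⦃X Y : C⦄ (f : X ⟶ Y), L.map f = 0 →
      ∃ (Z : C) (s : Y ⟶ Z) (_ : W s), f ≫ s = 0 := by
    intro X Y f hf
    have : L.map f = L.map (0 : X ⟶ Y) := by rw [hf, L.map_zero]
    rw [MorphismProperty.map_eq_iff_postcomp L W] at this
    obtain ⟨Z, s, hs, h⟩ := this
    exact ⟨Z, s, hs, by simpa using h⟩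
  have key : ∀ ⦃A B : C⦄ (a : A ⟶ B),
      Nonempty (IsColimit (CokernelCofork.ofπ (f := L.map a) (L.map (cokernel.π a))
        (by rw [← L.map_comp, cokernel.condition, Functor.map_zero]))) := by
    intro A B a
    -- `L.map (cokernel.π a)` is an epimorphism
    haveI : Epi (L.map (cokernel.π a)) := by
      refine ⟨fun {X} u v huv => ?_⟩
      rw [← sub_eq_zero]
      set h : L.obj (cokernel a) ⟶ X := u - v with hh
      have hπh : L.map (cokernel.π a) ≫ h = 0 := by
        rw [hh, Preadditive.comp_sub, huv, sub_self]
      let e : L.obj (L.objPreimage X) ≅ X := L.objObjPreimageIso X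
      obtain ⟨φ, hφ⟩ := Localization.exists_leftFraction L W (h ≫ e.inv)
      haveI := hW _ φ.hs
      have hmap : φ.map L hW = L.map φ.f ≫ inv (L.map φ.s) := rfl
      have h1 : L.map (cokernel.π a ≫ φ.f) = 0 := by
        rw [L.map_comp, ← MorphismProperty.LeftFraction.map_comp_map_s φ L hW, ← hφ]
        rw [← Category.assoc, ← Category.assoc, hπh, zero_comp, zero_comp]
      obtain ⟨Z, s, hs, h2⟩ := hzero _ h1
      haveI := hW _ hs
      have h3 : φ.f ≫ s = 0 := by
        rw [Category.assoc] at h2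
        exact (cancel_epi (cokernel.π a)).1 (by simpa using h2)
      have h4 : L.map φ.f = 0 := by
        have h5 := congrArg L.map h3
        rw [L.map_comp, L.map_zero] at h5
        exact (cancel_mono (L.map s)).1 (by simpa using h5)
      have h6 : h ≫ e.inv = 0 := by rw [hφ, hmap, h4, zero_comp]
      have := (cancel_mono e.inv).2 (by simpa using h6)
      simpa using this
    -- existence of the descent
    have hdesc : ∀ {Z' : D} (k : L.obj B ⟶ Z'), L.map a ≫ k = 0 →
        ∃ l, L.map (cokernel.π a) ≫ l = k := by
      intro Z' k hk
      let e : L.obj (L.objPreimage Z') ≅ Z' := L.objObjPreimageIso Z'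
      obtain ⟨φ, hφ⟩ := Localization.exists_leftFraction L W (k ≫ e.inv)
      haveI := hW _ φ.hs
      have hmap : φ.map L hW = L.map φ.f ≫ inv (L.map φ.s) := rfl
      have h1 : L.map (a ≫ φ.f) = 0 := by
        rw [L.map_comp, ← MorphismProperty.LeftFraction.map_comp_map_s φ L hW, ← hφ]
        rw [← Category.assoc, ← Category.assoc, hk, zero_comp, zero_comp]
      obtain ⟨Z, s, hs, h2⟩ := hzero _ h1
      haveI := hW _ hs
      rw [Category.assoc] at h2
      refine ⟨L.map (cokernel.desc a (φ.f ≫ s) h2) ≫ inv (L.map s) ≫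
        inv (L.map φ.s) ≫ e.hom, ?_⟩
      rw [← Category.assoc, ← L.map_comp, cokernel.π_desc, L.map_comp]
      simp only [Category.assoc, IsIso.hom_inv_id_assoc]
      rw [← Category.assoc, ← hmap, ← hφ]
      simp [e]
    exact ⟨CokernelCofork.IsColimit.ofπ' _ _
      (fun {Z'} k hk => ⟨(hdesc k hk).choose, (hdesc k hk).choose_spec⟩)⟩
  constructor
  · constructor
    intro X Y f
    let eX : L.obj (L.objPreimage X) ≅ X := L.objObjPreimageIso X
    let eY : L.obj (L.objPreimage Y) ≅ Y := L.objObjPreimageIso Y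
    obtain ⟨φ, hφ⟩ := Localization.exists_leftFraction L W (eX.hom ≫ f ≫ eY.inv)
    haveI := hW _ φ.hs
    have hmap : φ.map L hW = L.map φ.f ≫ inv (L.map φ.s) := rfl
    haveI : HasCokernel (L.map φ.f) := HasColimit.mk ⟨_, (key φ.f).some⟩
    haveI : HasCokernel (L.map φ.f ≫ inv (L.map φ.s)) := hasCokernel_comp_iso _ _
    haveI : HasCokernel ((L.map φ.f ≫ inv (L.map φ.s)) ≫ eY.hom) := hasCokernel_comp_iso _ _
    haveI : HasCokernel (eX.inv ≫ (L.map φ.f ≫ inv (L.map φ.s)) ≫ eY.hom) :=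
      hasCokernel_epi_comp _ _
    have hf : f = eX.inv ≫ (L.map φ.f ≫ inv (L.map φ.s)) ≫ eY.hom := by
      rw [← hmap, ← hφ]
      simp [eX, eY]
    rw [hf]
    infer_instance
  · exact key
end

section
/- Let σ be a severe right Ore set in the category of finitely presented right R-modules, and for M finitely presented let M_σ = colim_{s ∈ σ, dom(s)=M} codom(s) over the directed system of maps in σ starting at M (with morphisms given by maps t ∈ σ with s ∘ t in the system). Then for finitely presented M, N, the natural map λ : colim_{t} Hom(M, N_t) → Hom_{A_σ}([M],[N]), f ↦ f ∘ t⁻¹, is a bijection; in particular Hom_R(M, N_σ) ≅ Hom_{A_σ}([M],[N]). -/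
open CategoryTheory CategoryTheory.Limits

universe v' u u'

/-- The category of finitely presented right `R`-modules. -/
abbrev FPMod (R : Type u) [Ring R] :=
  CategoryTheory.ObjectProperty.FullSubcategory (fun M : ModuleCat.{u} R => Module.FinitePresentation R M)

/-- A severe right Ore set in the category of finitely presented right `R`-modules:
it contains all isomorphisms, is closed under composition, is closed under pushouts and
is severely right revengeful (the pushout of `s : A ⟶ B` along `a : A ⟶ C` being the
canonical map out of `C` to the cokernel of `(s a) : A ⟶ B ⊕ C`, which is a pushout
square in the categorical sense). -/
structure SevereOreFP (R : Type u) [Ring R] : Type (u + 1) where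
  P : CategoryTheory.MorphismProperty (FPMod R)
  iso_mem : ∀ ⦃A B : FPMod R⦄ (f : A ⟶ B), IsIso f → P f
  comp_mem : ∀ ⦃A B C : FPMod R⦄ (f : A ⟶ B) (g : B ⟶ C), P f → P g → P (f ≫ g)
  pushout_mem : ∀ ⦃A B C : FPMod R⦄ (s : A ⟶ B) (a : A ⟶ C), P s →
    ∃ (D : FPMod R) (b : B ⟶ D) (s' : C ⟶ D), IsPushout s a b s' ∧ P s'
  revenge : ∀ ⦃A B C : FPMod R⦄ (s : A ⟶ B) (a : B ⟶ C), P s → s ≫ a = 0 →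
    ∃ (D : FPMod R) (c : C ⟶ D) (hc : a ≫ c = 0),
      Nonempty (IsColimit (CokernelCofork.ofπ c hc)) ∧ P c

variable {R : Type u} [Ring R]

/-- The directed system of maps in `σ` with domain `N`. -/
structure SevereOreFP.Idx (σ : SevereOreFP R) (N : FPMod R) : Type (u + 1) where
  cod : FPMod R
  hom : N ⟶ cod
  mem : σ.P hom

/-- The map `λ` sending `f : M ⟶ N_t` (with `t : N ⟶ N_t` in `σ`) to the morphism
`f ∘ t⁻¹ : [M] ⟶ [N]` in the localized category. -/
noncomputable def SevereOreFP.lam (σ : SevereOreFP R)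
    {D : Type u'} [Category.{v'} D] (L : FPMod R ⥤ D) [L.IsLocalization σ.P]
    {M N : FPMod R} (t : σ.Idx N) (f : M ⟶ t.cod) : L.obj M ⟶ L.obj N :=
  have : IsIso (L.map t.hom) := Localization.inverts L σ.P t.hom t.mem
  L.map f ≫ inv (L.map t.hom)

namespace SevereOreFP

variable (σ : SevereOreFP R)

/-- Both legs of a pushout of two maps in `σ` may be chosen in `σ`. -/
lemma pushout_mem₂ ⦃A B C : FPMod R⦄ (s : A ⟶ B) (a : A ⟶ C)
    (hs : σ.P s) (ha : σ.P a) :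
    ∃ (D : FPMod R) (b : B ⟶ D) (s' : C ⟶ D), s ≫ b = a ≫ s' ∧ σ.P b ∧ σ.P s' := by
  obtain ⟨D, b, s', h, hs'⟩ := σ.pushout_mem s a hs
  obtain ⟨D₂, b₂, a₂, h₂, ha₂⟩ := σ.pushout_mem a s ha
  -- `h : IsPushout s a b s'`, `h₂.flip : IsPushout s a a₂ b₂`
  have hb := h.inl_isoIsPushout_inv _ _ h₂.flip
  refine ⟨D, b, s', h.w, ?_, hs'⟩
  rw [← hb]
  exact σ.comp_mem _ _ ha₂ (σ.iso_mem _ inferInstance)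

lemma hasLeftCalculusOfFractions :
    σ.P.HasLeftCalculusOfFractions := by
  have mult : σ.P.IsMultiplicative :=
    { id_mem := fun X => σ.iso_mem _ inferInstance
      comp_mem := fun f g hf hg => σ.comp_mem f g hf hg }
  refine { exists_leftFraction := ?_, ext := ?_ }
  · rintro X Y ⟨s, hs, f⟩
    obtain ⟨D, b, s', h, hs'⟩ := σ.pushout_mem s f hs
    exact ⟨⟨b, s', hs'⟩, h.w.symm⟩
  · intro X' X Y f₁ f₂ s hs hcomp
    have hcomp' : (s.hom ≫ f₁.hom : X'.obj ⟶ Y.obj) = s.hom ≫ f₂.hom := congrArg (fun g => g.hom) hcomp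
    have h0 : (s.hom ≫ (f₁.hom - f₂.hom : X.obj ⟶ Y.obj) : X'.obj ⟶ Y.obj) = 0 := by
      rw [Preadditive.comp_sub, hcomp']
      exact sub_self _
    obtain ⟨E, c, hc, -, hcσ⟩ :=
      σ.revenge s (ObjectProperty.homMk (f₁.hom - f₂.hom : X.obj ⟶ Y.obj) : X ⟶ Y) hs
        (ObjectProperty.hom_ext (h := by exact h0))
    refine ⟨E, c, hcσ, ?_⟩
    have hc' : ((f₁.hom - f₂.hom : X.obj ⟶ Y.obj) ≫ c.hom : X.obj ⟶ E.obj) = 0 :=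
      congrArg (fun g => g.hom) hc
    rw [Preadditive.sub_comp] at hc'
    exact ObjectProperty.hom_ext (h := sub_eq_zero.mp hc')

end SevereOreFP

/-- Let `σ` be a severe right Ore set in the category of finitely presented right
`R`-modules and let `L` be the localization functor to the localized category `A_σ`.
Then the natural map `λ : colim_t Hom(M, N_t) → Hom_{A_σ}([M], [N])`, `f ↦ f ∘ t⁻¹`,
is a bijection: it is surjective, and two elements `f₁ ∘ t₁⁻¹`, `f₂ ∘ t₂⁻¹` agree iff
they are identified in the colimit, i.e. there exist `u₁, u₂ ∈ σ` with
`t₁ ≫ u₁ = t₂ ≫ u₂` and `f₁ ≫ u₁ = f₂ ≫ u₂`. -/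
theorem lam_bijective (σ : SevereOreFP R)
    {D : Type u'} [Category.{v'} D] (L : FPMod R ⥤ D) [L.IsLocalization σ.P]
    (M N : FPMod R) :
    (∀ g : L.obj M ⟶ L.obj N, ∃ (t : σ.Idx N) (f : M ⟶ t.cod), g = σ.lam L t f) ∧
    (∀ (t₁ t₂ : σ.Idx N) (f₁ : M ⟶ t₁.cod) (f₂ : M ⟶ t₂.cod),
      σ.lam L t₁ f₁ = σ.lam L t₂ f₂ →
      ∃ (D' : FPMod R) (u₁ : t₁.cod ⟶ D') (u₂ : t₂.cod ⟶ D'),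
        σ.P u₁ ∧ σ.P u₂ ∧ t₁.hom ≫ u₁ = t₂.hom ≫ u₂ ∧ f₁ ≫ u₁ = f₂ ≫ u₂) := by
  have hW : σ.P.HasLeftCalculusOfFractions := σ.hasLeftCalculusOfFractions
  constructor
  · intro g
    obtain ⟨φ, hφ⟩ := Localization.exists_leftFraction L σ.P g
    refine ⟨⟨φ.Y', φ.s, φ.hs⟩, φ.f, ?_⟩
    rw [hφ, MorphismProperty.LeftFraction.map_eq]
    have : IsIso (L.map φ.s) := Localization.inverts L σ.P φ.s φ.hs
    have hinv : (Localization.isoOfHom L σ.P φ.s φ.hs).inv = inv (L.map φ.s) := by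
      rw [← cancel_mono (L.map φ.s), Localization.isoOfHom_inv_hom_id, IsIso.inv_hom_id]
    show L.map φ.f ≫ (Localization.isoOfHom L σ.P φ.s φ.hs).inv = L.map φ.f ≫ inv (L.map φ.s)
    rw [hinv]
  · intro t₁ t₂ f₁ f₂ heq
    obtain ⟨P, v₁, v₂, hw, hv₁, hv₂⟩ :=
      σ.pushout_mem₂ t₁.hom t₂.hom t₁.mem t₂.mem
    have i₁ : IsIso (L.map t₁.hom) := Localization.inverts L σ.P _ t₁.mem
    have i₂ : IsIso (L.map t₂.hom) := Localization.inverts L σ.P _ t₂.mem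
    have heq' : L.map f₁ ≫ inv (L.map t₁.hom) = L.map f₂ ≫ inv (L.map t₂.hom) := heq
    have key : L.map (f₁ ≫ v₁) = L.map (f₂ ≫ v₂) := by
      have e₁ : L.map v₁ = inv (L.map t₁.hom) ≫ L.map (t₁.hom ≫ v₁) := by
        rw [L.map_comp, IsIso.inv_hom_id_assoc]
      have e₂ : L.map v₂ = inv (L.map t₂.hom) ≫ L.map (t₂.hom ≫ v₂) := by
        rw [L.map_comp, IsIso.inv_hom_id_assoc]
      rw [L.map_comp, L.map_comp, e₁, e₂, hw, ← Category.assoc, ← Category.assoc, heq']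
    rw [MorphismProperty.map_eq_iff_postcomp L σ.P] at key
    obtain ⟨Z, w, hwσ, hfac⟩ := key
    refine ⟨Z, v₁ ≫ w, v₂ ≫ w, σ.comp_mem _ _ hv₁ hwσ, σ.comp_mem _ _ hv₂ hwσ, ?_, ?_⟩
    · rw [← Category.assoc, ← Category.assoc, hw]
    · rw [← Category.assoc, ← Category.assoc]
      simpa using hfac
end

section
/- Let σ be a severe right Ore set in the category of finitely presented right R-modules and let M_σ denote the directed colimit of codomains of maps in σ with domain M. Then for finitely presented M and N, the natural map ι : M → M_σ induces an isomorphism Hom_R(M_σ, N_σ) ≅ Hom_R(M, N_σ). -/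
open CategoryTheory CategoryTheory.Limits

universe u

/-- A severe right Ore set in the category of finitely presented right `R`-modules
(modelled as a class of maps between finitely presented objects of `ModuleCat R`):
it contains all isomorphisms, is closed under composition and pushouts, and is
severely right revengeful. -/
structure SevereOre (R : Type u) [Ring R] : Type (u + 1) where
  P : CategoryTheory.MorphismProperty (ModuleCat.{u} R)
  fp_of_mem : ∀ ⦃A B : ModuleCat.{u} R⦄ (f : A ⟶ B), P f →
    Module.FinitePresentation R A ∧ Module.FinitePresentation R B
  iso_mem : ∀ ⦃A B : ModuleCat.{u} R⦄ (f : A ⟶ B), Module.FinitePresentation R A →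
    Module.FinitePresentation R B → IsIso f → P f
  comp_mem : ∀ ⦃A B C : ModuleCat.{u} R⦄ (f : A ⟶ B) (g : B ⟶ C), P f → P g → P (f ≫ g)
  pushout_mem : ∀ ⦃A B C : ModuleCat.{u} R⦄ (s : A ⟶ B) (a : A ⟶ C),
    Module.FinitePresentation R C → P s →
    P (biprod.inr ≫ cokernel.π (biprod.lift s a))
  revenge : ∀ ⦃A B C : ModuleCat.{u} R⦄ (s : A ⟶ B) (a : B ⟶ C),
    Module.FinitePresentation R C → P s → s ≫ a = 0 → P (cokernel.π a)

variable {R : Type u} [Ring R]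

/-- The directed system of maps in `σ` starting at `M`: objects are maps `s : M ⟶ M_s`
in `σ`, and morphisms `s → u` are maps `t ∈ σ` with `s ≫ t = u`. -/
structure SevereOre.Idx (σ : SevereOre R) (M : ModuleCat.{u} R) : Type (u + 1) where
  cod : ModuleCat.{u} R
  hom : M ⟶ cod
  mem : σ.P hom

instance (σ : SevereOre R) (M : ModuleCat.{u} R) : Category (σ.Idx M) where
  Hom s u := { t : s.cod ⟶ u.cod // σ.P t ∧ s.hom ≫ t = u.hom }
  id s := ⟨𝟙 s.cod,
    σ.iso_mem _ (σ.fp_of_mem _ s.mem).2 (σ.fp_of_mem _ s.mem).2 inferInstance,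
    Category.comp_id _⟩
  comp f g := ⟨f.1 ≫ g.1, σ.comp_mem _ _ f.2.1 g.2.1,
    by rw [← Category.assoc, f.2.2, g.2.2]⟩
  id_comp f := Subtype.ext (Category.id_comp f.1)
  comp_id f := Subtype.ext (Category.comp_id f.1)
  assoc f g h := Subtype.ext (Category.assoc f.1 g.1 h.1)

/-- The diagram `s ↦ M_s` of codomains of maps in `σ` with domain `M`. -/
def SevereOre.diag (σ : SevereOre R) (M : ModuleCat.{u} R) :
    σ.Idx M ⥤ ModuleCat.{u} R where
  obj s := s.cod
  map t := t.1
  map_id _ := rfl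
  map_comp _ _ := rfl


namespace SevereOre

variable {R : Type u} [Ring R] (σ : SevereOre R) {M : ModuleCat.{u} R}

lemma fp_cod (t : σ.Idx M) : Module.FinitePresentation R t.cod :=
  (σ.fp_of_mem _ t.mem).2

lemma neg_one_isIso (X : ModuleCat.{u} R) : IsIso (-𝟙 X) :=
  ⟨⟨-𝟙 X, by simp, by simp⟩⟩

lemma pushout_comm {A B C : ModuleCat.{u} R} (s : A ⟶ B) (a : A ⟶ C) :
    s ≫ (biprod.inl ≫ cokernel.π (biprod.lift s (-a))) =
      a ≫ (biprod.inr ≫ cokernel.π (biprod.lift s (-a))) := by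
  have e : biprod.lift s (-a) = s ≫ biprod.inl - a ≫ biprod.inr := by
    apply biprod.hom_ext <;> simp
  have h : (s ≫ biprod.inl - a ≫ biprod.inr) ≫ cokernel.π (biprod.lift s (-a)) = 0 := by
    rw [← e]; exact cokernel.condition _
  rw [Preadditive.sub_comp, sub_eq_zero] at h
  simpa [Category.assoc] using h

lemma pushout_inl_mem {A B C : ModuleCat.{u} R} (s : A ⟶ B) (a : A ⟶ C)
    (hs : σ.P s) (ha : σ.P a) :
    σ.P (biprod.inl ≫ cokernel.π (biprod.lift s (-a))) := by
  have hB : Module.FinitePresentation R B := (σ.fp_of_mem s hs).2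
  have hC : Module.FinitePresentation R C := (σ.fp_of_mem a ha).2
  have hq₂ : σ.P (biprod.inr ≫ cokernel.π (biprod.lift a (-s))) :=
    σ.pushout_mem a (-s) hB ha
  have hq₁ : σ.P (biprod.inr ≫ cokernel.π (biprod.lift s (-a))) :=
    σ.pushout_mem s (-a) hC hs
  set f₁ := biprod.lift s (-a) with hf₁
  set f₂ := biprod.lift a (-s) with hf₂
  let β : C ⊞ B ⟶ B ⊞ C := -(biprod.braiding C B).hom
  have hβiso : IsIso β := by
    have h1 : β = (biprod.braiding C B).hom ≫ (-𝟙 (B ⊞ C)) := by simp [β]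
    rw [h1]
    have := neg_one_isIso (B ⊞ C)
    infer_instance
  have hβ : f₂ ≫ β = 𝟙 A ≫ f₁ := by
    apply biprod.hom_ext <;> simp [β, f₁, f₂]
  let φ : cokernel f₂ ≅ cokernel f₁ :=
    cokernel.mapIso f₂ f₁ (Iso.refl A) (asIso β) hβ
  have hfp₂ := (σ.fp_of_mem _ hq₂).2
  have hfp₁ := (σ.fp_of_mem _ hq₁).2
  have hkey : biprod.inl ≫ cokernel.π f₁ =
      (biprod.inr ≫ cokernel.π f₂) ≫ (φ.hom ≫ (-𝟙 (cokernel f₁))) := by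
    have h2 : cokernel.π f₂ ≫ φ.hom = β ≫ cokernel.π f₁ := by
      simp [φ, cokernel.mapIso]
    have h3 : biprod.inr ≫ β = -biprod.inl := by
      apply biprod.hom_ext <;> simp [β]
    rw [Category.assoc, ← Category.assoc (cokernel.π f₂), h2]
    rw [← Category.assoc, ← Category.assoc, h3]
    simp
  rw [hkey]
  refine σ.comp_mem _ _ hq₂ (σ.iso_mem _ hfp₂ hfp₁ ?_)
  have := neg_one_isIso (cokernel f₁)
  infer_instance

lemma isFiltered (hM : Module.FinitePresentation R M) : IsFiltered (σ.Idx M) := by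
  have hne : Nonempty (σ.Idx M) := ⟨⟨M, 𝟙 M, σ.iso_mem _ hM hM inferInstance⟩⟩
  refine @IsFiltered.mk _ _ ⟨?_, ?_⟩ hne
  · intro s u
    set f₁ := biprod.lift s.hom (-u.hom) with hf₁
    have hp : σ.P (biprod.inl ≫ cokernel.π f₁) := σ.pushout_inl_mem s.hom u.hom s.mem u.mem
    have hq : σ.P (biprod.inr ≫ cokernel.π f₁) :=
      σ.pushout_mem s.hom (-u.hom) (σ.fp_cod u) s.mem
    have hcomm := pushout_comm s.hom u.hom
    refine ⟨⟨cokernel f₁, s.hom ≫ (biprod.inl ≫ cokernel.π f₁), σ.comp_mem _ _ s.mem hp⟩,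
      ⟨_, hp, rfl⟩, ⟨_, hq, hcomm.symm⟩, trivial⟩
  · intro s u t₁ t₂
    have h0 : s.hom ≫ (t₁.1 - t₂.1) = 0 := by
      rw [Preadditive.comp_sub, t₁.2.2, t₂.2.2, sub_self]
    have hπ : σ.P (cokernel.π (t₁.1 - t₂.1)) :=
      σ.revenge s.hom (t₁.1 - t₂.1) (σ.fp_cod u) s.mem h0
    refine ⟨⟨cokernel (t₁.1 - t₂.1), u.hom ≫ cokernel.π (t₁.1 - t₂.1),
      σ.comp_mem _ _ u.mem hπ⟩, ⟨_, hπ, rfl⟩, ?_⟩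
    apply Subtype.ext
    show t₁.1 ≫ cokernel.π (t₁.1 - t₂.1) = t₂.1 ≫ cokernel.π (t₁.1 - t₂.1)
    rw [← sub_eq_zero, ← Preadditive.sub_comp]
    exact cokernel.condition _

lemma essentiallySmall (N : ModuleCat.{u} R) : EssentiallySmall.{u} (σ.Idx N) := by
  rw [essentiallySmall_iff]
  refine ⟨?_, inferInstance⟩
  let Sig : Type u := Σ (n : ℕ) (K : Submodule R (Fin n → R)),
    {h : N ⟶ ModuleCat.of R ((Fin n → R) ⧸ K) // σ.P h}
  refine small_of_surjective (f := fun x : Sig =>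
    (toSkeleton (⟨ModuleCat.of R ((Fin x.1 → R) ⧸ x.2.1), x.2.2.1, x.2.2.2⟩ : σ.Idx N))) ?_
  intro y
  obtain ⟨t, rfl⟩ := Quotient.exists_rep y
  have hfp := σ.fp_cod t
  haveI : Module.FinitePresentation R t.cod := hfp
  obtain ⟨n, p, hp⟩ := Module.Finite.exists_fin' R t.cod
  set K := LinearMap.ker p with hK
  let e : ((Fin n → R) ⧸ K) ≃ₗ[R] t.cod := p.quotKerEquivOfSurjective hp
  let Q : ModuleCat.{u} R := ModuleCat.of R ((Fin n → R) ⧸ K)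
  have hfpQ : Module.FinitePresentation R ((Fin n → R) ⧸ K) := by
    refine Module.finitePresentation_of_surjective e.symm.toLinearMap e.symm.surjective ?_
    have : LinearMap.ker e.symm.toLinearMap = ⊥ := LinearEquiv.ker _
    rw [this]
    exact Submodule.fg_bot
  let iso : t.cod ≅ Q := e.symm.toModuleIso
  have hmem : σ.P (iso.hom) := σ.iso_mem _ hfp hfpQ inferInstance
  have hmem' : σ.P (iso.inv) := σ.iso_mem _ hfpQ hfp inferInstance
  let A : σ.Idx N := ⟨Q, t.hom ≫ iso.hom, σ.comp_mem _ _ t.mem hmem⟩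
  refine ⟨⟨n, K, t.hom ≫ iso.hom, σ.comp_mem _ _ t.mem hmem⟩, ?_⟩
  refine Quotient.sound ⟨?_⟩
  refine ⟨⟨iso.inv, hmem', by simp⟩, ⟨iso.hom, hmem, rfl⟩, ?_, ?_⟩
  · apply Subtype.ext
    show iso.inv ≫ iso.hom = 𝟙 _
    simp
  · apply Subtype.ext
    show iso.hom ≫ iso.inv = 𝟙 _
    simp

lemma ι_naturality_apply {N : ModuleCat.{u} R} (cN : Cocone (σ.diag N)) {t u : σ.Idx N}
    (c : t ⟶ u) (x : t.cod) :
    cN.ι.app u (c.1 x) = cN.ι.app t x := by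
  have h := cN.w c
  conv_rhs => rw [← h]
  rfl

lemma exists_rep {N : ModuleCat.{u} R} (hN : Module.FinitePresentation R N)
    (cN : Cocone (σ.diag N)) (hcN : IsColimit cN) (x : cN.pt) :
    ∃ (t : σ.Idx N) (y : t.cod), cN.ι.app t y = x := by
  haveI := σ.essentiallySmall N
  haveI := σ.isFiltered hN
  let eqv := equivSmallModel (σ.Idx N)
  haveI : IsFiltered (SmallModel (σ.Idx N)) := IsFiltered.of_equivalence eqv
  let F := eqv.symm.functor ⋙ σ.diag N
  let c' : Cocone F := cN.whisker eqv.symm.functor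
  have hc' : IsColimit c' := hcN.whiskerEquivalence eqv.symm
  obtain ⟨j, y, hy⟩ := Concrete.isColimit_exists_rep F hc' x
  exact ⟨eqv.symm.functor.obj j, y, hy⟩

lemma exists_kill {N : ModuleCat.{u} R} (hN : Module.FinitePresentation R N)
    (cN : Cocone (σ.diag N)) (hcN : IsColimit cN) (t : σ.Idx N) (x : t.cod)
    (hx : cN.ι.app t x = 0) :
    ∃ (t' : σ.Idx N) (c : t ⟶ t'), (c.1 : t.cod ⟶ t'.cod) x = 0 := by
  haveI := σ.essentiallySmall N
  haveI := σ.isFiltered hN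
  let eqv := equivSmallModel (σ.Idx N)
  haveI : IsFiltered (SmallModel (σ.Idx N)) := IsFiltered.of_equivalence eqv
  let F := eqv.symm.functor ⋙ σ.diag N
  let c' : Cocone F := cN.whisker eqv.symm.functor
  have hc' : IsColimit c' := hcN.whiskerEquivalence eqv.symm
  let j := eqv.functor.obj t
  let η : t ⟶ eqv.symm.functor.obj j := eqv.unit.app t
  let x' : F.obj j := (η.1 : t.cod ⟶ _) x
  have h1 : c'.ι.app j x' = cN.ι.app t x := σ.ι_naturality_apply cN η x
  have h2 : c'.ι.app j x' = c'.ι.app j (0 : F.obj j) := by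
    rw [h1, hx, map_zero]
  obtain ⟨k, f, g, hfg⟩ := (Concrete.isColimit_rep_eq_iff_exists F hc' x' (0 : F.obj j)).mp h2
  refine ⟨eqv.symm.functor.obj k, η ≫ eqv.symm.functor.map f, ?_⟩
  have hz : (F.map g) (0 : F.obj j) = 0 := map_zero _
  exact hfg.trans hz

lemma exists_rep_fin {N : ModuleCat.{u} R} (hN : Module.FinitePresentation R N)
    (cN : Cocone (σ.diag N)) (hcN : IsColimit cN) (n : ℕ) (x : Fin n → cN.pt) :
    ∃ (t : σ.Idx N) (y : Fin n → t.cod), ∀ i, cN.ι.app t (y i) = x i := by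
  haveI := σ.isFiltered hN
  induction n with
  | zero => exact ⟨⟨N, 𝟙 N, σ.iso_mem _ hN hN inferInstance⟩, Fin.elim0, fun i => i.elim0⟩
  | succ n ih =>
    obtain ⟨t₁, y₁, h₁⟩ := ih (fun i => x i.castSucc)
    obtain ⟨t₂, y₂, h₂⟩ := σ.exists_rep hN cN hcN (x (Fin.last n))
    let w := IsFiltered.max t₁ t₂
    let l : t₁ ⟶ w := IsFiltered.leftToMax t₁ t₂
    let r : t₂ ⟶ w := IsFiltered.rightToMax t₁ t₂
    refine ⟨w, Fin.snoc (fun i => (l.1 : t₁.cod ⟶ w.cod) (y₁ i)) ((r.1 : t₂.cod ⟶ w.cod) y₂), ?_⟩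
    intro i
    refine Fin.lastCases ?_ ?_ i
    · rw [Fin.snoc_last]
      rw [σ.ι_naturality_apply cN r y₂]
      exact h₂
    · intro i
      rw [Fin.snoc_castSucc]
      rw [σ.ι_naturality_apply cN l (y₁ i)]
      exact h₁ i

lemma exists_kill_fin {N : ModuleCat.{u} R} (hN : Module.FinitePresentation R N)
    (cN : Cocone (σ.diag N)) (hcN : IsColimit cN) (t : σ.Idx N) (n : ℕ) (x : Fin n → t.cod)
    (hx : ∀ i, cN.ι.app t (x i) = 0) :
    ∃ (t' : σ.Idx N) (c : t ⟶ t'), ∀ i, (c.1 : t.cod ⟶ t'.cod) (x i) = 0 := by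
  induction n with
  | zero => exact ⟨t, 𝟙 t, fun i => i.elim0⟩
  | succ n ih =>
    obtain ⟨t₁, c₁, h₁⟩ := ih (fun i => x i.castSucc) (fun i => hx i.castSucc)
    have hlast : cN.ι.app t₁ ((c₁.1 : t.cod ⟶ t₁.cod) (x (Fin.last n))) = 0 := by
      rw [σ.ι_naturality_apply cN c₁ (x (Fin.last n))]
      exact hx (Fin.last n)
    obtain ⟨t₂, c₂, h₂⟩ := σ.exists_kill hN cN hcN t₁ _ hlast
    refine ⟨t₂, c₁ ≫ c₂, ?_⟩
    intro i
    refine Fin.lastCases ?_ ?_ i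
    · exact h₂
    · intro i
      show (c₂.1 : t₁.cod ⟶ t₂.cod) ((c₁.1 : t.cod ⟶ t₁.cod) (x i.castSucc)) = 0
      rw [h₁ i, map_zero]

lemma exists_kill_hom {N : ModuleCat.{u} R} (hN : Module.FinitePresentation R N)
    (cN : Cocone (σ.diag N)) (hcN : IsColimit cN) {A : ModuleCat.{u} R}
    (hA : Module.Finite R A) (t : σ.Idx N) (a : A ⟶ t.cod)
    (h : a ≫ cN.ι.app t = 0) :
    ∃ (t' : σ.Idx N) (c : t ⟶ t'), a ≫ (c.1 : t.cod ⟶ t'.cod) = 0 := by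
  obtain ⟨S, hS⟩ := hA.fg_top
  have happ : ∀ z : A, cN.ι.app t (a z) = 0 := by
    intro z
    exact congrArg (fun (f : A ⟶ cN.pt) => f z) h
  obtain ⟨t', c, hc⟩ := σ.exists_kill_fin hN cN hcN t S.card
    (fun i => a ((S.equivFin.symm i : A))) (fun i => happ _)
  refine ⟨t', c, ?_⟩
  have hker : (⊤ : Submodule R A) ≤
      LinearMap.ker ((c.1 : t.cod ⟶ t'.cod).hom ∘ₗ a.hom) := by
    rw [← hS]
    apply Submodule.span_le.mpr
    intro z hz
    have hz' : z ∈ S := hz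
    have : a z = a ((S.equivFin.symm (S.equivFin ⟨z, hz'⟩) : A)) := by
      rw [Equiv.symm_apply_apply]
    simp only [SetLike.mem_coe, LinearMap.mem_ker, LinearMap.comp_apply]
    rw [this]
    exact hc _
  apply ModuleCat.hom_ext
  apply LinearMap.ext
  intro z
  exact hker (Submodule.mem_top : z ∈ ⊤)

lemma exists_hom_factor {N : ModuleCat.{u} R} (hN : Module.FinitePresentation R N)
    (cN : Cocone (σ.diag N)) (hcN : IsColimit cN) {A : ModuleCat.{u} R}
    (hA : Module.FinitePresentation R A) (f : A ⟶ cN.pt) :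
    ∃ (t : σ.Idx N) (a : A ⟶ t.cod), a ≫ cN.ι.app t = f := by
  haveI := hA
  obtain ⟨n, p, hp⟩ := Module.Finite.exists_fin' R A
  let b := Pi.basisFun R (Fin n)
  obtain ⟨t₀, y, hy⟩ := σ.exists_rep_fin hN cN hcN n (fun i => f (p (b i)))
  let g₀ : (Fin n → R) →ₗ[R] t₀.cod := b.constr ℕ y
  have hg₀ : ∀ v, cN.ι.app t₀ (g₀ v) = f (p v) := by
    have hL : (cN.ι.app t₀).hom ∘ₗ g₀ = f.hom ∘ₗ p := by
      apply b.ext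
      intro i
      simp only [LinearMap.comp_apply]
      exact (congrArg (cN.ι.app t₀) (b.constr_basis ℕ y i)).trans (hy i)
    intro v
    exact congrArg (fun (L : (Fin n → R) →ₗ[R] cN.pt) => L v) hL
  have hfg : (LinearMap.ker p).FG := Module.FinitePresentation.fg_ker p hp
  obtain ⟨T, hT⟩ := hfg
  have hzero : ∀ i : Fin T.card, cN.ι.app t₀ (g₀ ((T.equivFin.symm i : Fin n → R))) = 0 := by
    intro i
    rw [hg₀]
    have : ((T.equivFin.symm i : Fin n → R)) ∈ LinearMap.ker p := by
      rw [← hT]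
      exact Submodule.subset_span (T.equivFin.symm i).2
    rw [LinearMap.mem_ker.mp this, map_zero]
  obtain ⟨t₁, c, hc⟩ := σ.exists_kill_fin hN cN hcN t₀ T.card _ hzero
  let g₁ : (Fin n → R) →ₗ[R] t₁.cod := (c.1 : t₀.cod ⟶ t₁.cod).hom ∘ₗ g₀
  have hker : LinearMap.ker p ≤ LinearMap.ker g₁ := by
    rw [← hT]
    apply Submodule.span_le.mpr
    intro z hz
    have hz' : z ∈ T := hz
    simp only [SetLike.mem_coe, LinearMap.mem_ker, LinearMap.comp_apply, g₁]
    have : z = ((T.equivFin.symm (T.equivFin ⟨z, hz'⟩) : Fin n → R)) := by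
      rw [Equiv.symm_apply_apply]
    rw [this]
    exact hc _
  let e := p.quotKerEquivOfSurjective hp
  let a : A ⟶ t₁.cod :=
    ModuleCat.ofHom ((Submodule.liftQ (LinearMap.ker p) g₁ hker) ∘ₗ (e.symm : A →ₗ[R] _))
  refine ⟨t₁, a, ?_⟩
  apply ModuleCat.hom_ext
  apply LinearMap.ext
  intro z
  obtain ⟨v, rfl⟩ := hp z
  show cN.ι.app t₁ (a (p v)) = f (p v)
  have hsymm : e.symm (p v) = Submodule.Quotient.mk v := by
    apply e.injective
    rw [LinearEquiv.apply_symm_apply]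
    rfl
  have ha : a (p v) = g₁ v := by
    show (Submodule.liftQ (LinearMap.ker p) g₁ hker) (e.symm (p v)) = g₁ v
    rw [hsymm]
    exact Submodule.liftQ_apply _ _ _
  rw [ha]
  show cN.ι.app t₁ ((c.1 : t₀.cod ⟶ t₁.cod) (g₀ v)) = f (p v)
  rw [σ.ι_naturality_apply cN c (g₀ v)]
  exact hg₀ v

lemma key {N : ModuleCat.{u} R} (hN : Module.FinitePresentation R N)
    (cN : Cocone (σ.diag N)) (hcN : IsColimit cN) {A B : ModuleCat.{u} R}
    (s : A ⟶ B) (hs : σ.P s) :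
    Function.Bijective (fun g : B ⟶ cN.pt => s ≫ g) := by
  have hA := (σ.fp_of_mem s hs).1
  have hB := (σ.fp_of_mem s hs).2
  have hzero : ∀ g : B ⟶ cN.pt, s ≫ g = 0 → g = 0 := by
    intro g hg
    obtain ⟨t, bmap, hb⟩ := σ.exists_hom_factor hN cN hcN hB g
    have h0 : (s ≫ bmap) ≫ cN.ι.app t = 0 := (Category.assoc s bmap (cN.ι.app t)).trans ((congrArg (fun x => s ≫ x) hb).trans hg)
    haveI : Module.FinitePresentation R A := hA
    obtain ⟨t', c, hc⟩ := σ.exists_kill_hom hN cN hcN (inferInstance : Module.Finite R A)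
      t (s ≫ bmap) h0
    have hrev : σ.P (cokernel.π (bmap ≫ c.1)) :=
      σ.revenge s (bmap ≫ c.1) (σ.fp_cod t') hs (by rw [← Category.assoc]; exact hc)
    let t'' : σ.Idx N := ⟨cokernel (bmap ≫ c.1),
      t'.hom ≫ cokernel.π (bmap ≫ c.1), σ.comp_mem _ _ t'.mem hrev⟩
    let c' : t' ⟶ t'' := ⟨cokernel.π (bmap ≫ c.1), hrev, rfl⟩
    have w1 : (c.1 : t.cod ⟶ t'.cod) ≫ cN.ι.app t' = cN.ι.app t := cN.w c
    have w2 : (c'.1 : t'.cod ⟶ t''.cod) ≫ cN.ι.app t'' = cN.ι.app t' := cN.w c'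
    calc g = bmap ≫ cN.ι.app t := hb.symm
      _ = ((bmap ≫ c.1) ≫ cokernel.π (bmap ≫ c.1)) ≫ cN.ι.app t'' := by
          rw [← w1, ← w2]; exact ((Category.assoc (bmap ≫ c.1) c'.1 (cN.ι.app t'')).trans (Category.assoc bmap c.1 _)).symm
      _ = 0 := by rw [cokernel.condition]; exact zero_comp
  constructor
  · intro g₁ g₂ h
    have h' : s ≫ (g₁ - g₂) = 0 := by
      rw [Preadditive.comp_sub, sub_eq_zero]
      exact h
    exact sub_eq_zero.mp (hzero _ h')
  · intro f
    obtain ⟨t, a, ha⟩ := σ.exists_hom_factor hN cN hcN hA f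
    have hq : σ.P (biprod.inr ≫ cokernel.π (biprod.lift s (-a))) :=
      σ.pushout_mem s (-a) (σ.fp_cod t) hs
    let t'' : σ.Idx N := ⟨cokernel (biprod.lift s (-a)),
      t.hom ≫ (biprod.inr ≫ cokernel.π (biprod.lift s (-a))), σ.comp_mem _ _ t.mem hq⟩
    let c : t ⟶ t'' := ⟨biprod.inr ≫ cokernel.π (biprod.lift s (-a)), hq, rfl⟩
    have w : (c.1 : t.cod ⟶ t''.cod) ≫ cN.ι.app t'' = cN.ι.app t := cN.w c
    refine ⟨(biprod.inl ≫ cokernel.π (biprod.lift s (-a))) ≫ cN.ι.app t'', ?_⟩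
    show s ≫ (biprod.inl ≫ cokernel.π (biprod.lift s (-a))) ≫ cN.ι.app t'' = f
    refine (Category.assoc s _ (cN.ι.app t'')).symm.trans ((congrArg (fun x => x ≫ cN.ι.app t'') (pushout_comm s a)).trans ((Category.assoc a _ (cN.ι.app t'')).trans ?_))
    have : (biprod.inr ≫ cokernel.π (biprod.lift s (-a))) ≫ cN.ι.app t'' = cN.ι.app t := w
    exact (congrArg (fun x => a ≫ x) this).trans ha

end SevereOre

/-- Let `σ` be a severe right Ore set in the category of finitely presented right
`R`-modules and, for finitely presented `M`, let `M_σ` be the directed colimit of the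
codomains of the maps in `σ` with domain `M`.  Then for finitely presented `M` and `N`,
the natural map `ι : M → M_σ` induces an isomorphism
`Hom_R(M_σ, N_σ) ≅ Hom_R(M, N_σ)`. -/
theorem hom_colim_bijective (σ : SevereOre R)
    (M N : ModuleCat.{u} R)
    (hM : Module.FinitePresentation R M) (hN : Module.FinitePresentation R N)
    (cM : Limits.Cocone (σ.diag M)) (hcM : Limits.IsColimit cM)
    (cN : Limits.Cocone (σ.diag N)) (hcN : Limits.IsColimit cN) :
    Function.Bijective (fun (g : cM.pt ⟶ cN.pt) =>
      cM.ι.app ⟨M, 𝟙 M, σ.iso_mem _ hM hM inferInstance⟩ ≫ g) := by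
  set idx : σ.Idx M := ⟨M, 𝟙 M, σ.iso_mem _ hM hM inferInstance⟩ with hidx
  constructor
  · intro g₁ g₂ h
    have h : cM.ι.app idx ≫ g₁ = cM.ι.app idx ≫ g₂ := h
    apply hcM.hom_ext
    intro s
    let e_s : idx ⟶ s := ⟨s.hom, s.mem, Category.id_comp _⟩
    have w : (e_s.1 : M ⟶ s.cod) ≫ cM.ι.app s = cM.ι.app idx := cM.w e_s
    apply (σ.key hN cN hcN s.hom s.mem).1
    show s.hom ≫ cM.ι.app s ≫ g₁ = s.hom ≫ cM.ι.app s ≫ g₂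
    exact (Category.assoc _ _ _).symm.trans ((congrArg (fun x => x ≫ g₁) w).trans (h.trans ((congrArg (fun x => x ≫ g₂) w).symm.trans (Category.assoc _ _ _))))
  · intro f
    have H : ∀ s : σ.Idx M, ∃ g : s.cod ⟶ cN.pt, s.hom ≫ g = f ∧
        ∀ g', s.hom ≫ g' = f → g' = g := by
      intro s
      obtain ⟨g, hg⟩ := (σ.key hN cN hcN s.hom s.mem).2 f
      exact ⟨g, hg, fun g' hg' => (σ.key hN cN hcN s.hom s.mem).1 (hg'.trans hg.symm)⟩
    choose g hg hgu using H
    let cc : Cocone (σ.diag M) :=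
      { pt := cN.pt
        ι :=
          { app := fun s => g s
            naturality := by
              intro s u e
              have he : s.hom ≫ ((e.1 : s.cod ⟶ u.cod) ≫ g u) = f := by
                rw [← Category.assoc, e.2.2]
                exact hg u
              have := hgu s _ he
              simp only [Functor.const_obj_map, Category.comp_id]
              exact this } }
    refine ⟨hcM.desc cc, ?_⟩
    show cM.ι.app idx ≫ hcM.desc cc = f
    rw [hcM.fac cc idx]
    show g idx = f
    refine (hgu idx f ?_).symm
    show (𝟙 M) ≫ f = f
    exact Category.id_comp f
end

section
/- Let S be a set of finitely presented right R-modules of projective dimension at most 1, let E be the extension closure of S, and let U be the class of quotients of modules in E. Then U is closed under extensions: if 0 → U₁ → U → U₂ → 0 is a short exact sequence with U₁, U₂ ∈ U, then U ∈ U. -/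
open CategoryTheory CategoryTheory.Limits

universe u

variable {R : Type u} [Ring R]

/-- The extension closure of a class `S` of modules: the smallest class containing `S`
and the zero modules and closed under extensions. -/
inductive ExtClosure (S : ModuleCat.{u} R → Prop) : ModuleCat.{u} R → Prop
  | mem (M : ModuleCat.{u} R) : S M → ExtClosure S M
  | zero (M : ModuleCat.{u} R) : Subsingleton ↥M → ExtClosure S M
  | ext ⦃A B C : ModuleCat.{u} R⦄ (i : A ⟶ B) (p : B ⟶ C) :
      Function.Injective i → Function.Surjective p →
      LinearMap.range i.hom = LinearMap.ker p.hom →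
      ExtClosure S A → ExtClosure S C → ExtClosure S B

theorem my_factor {A B P : Type u} [AddCommGroup A] [AddCommGroup B] [AddCommGroup P]
    [Module R A] [Module R B] [Module R P] {i : A →ₗ[R] B} (hi : Function.Injective i)
    (g : P →ₗ[R] B) (hg : ∀ x, g x ∈ LinearMap.range i) :
    ∃ t : P →ₗ[R] A, i ∘ₗ t = g := by
  refine ⟨(LinearEquiv.ofInjective i hi).symm.toLinearMap ∘ₗ
    g.codRestrict (LinearMap.range i) hg, ?_⟩
  ext x
  have : ∀ y : LinearMap.range i, i ((LinearEquiv.ofInjective i hi).symm y) = y := fun y => by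
    conv_rhs => rw [← (LinearEquiv.ofInjective i hi).apply_symm_apply y]
    rfl
  simpa using this ⟨g x, hg x⟩

theorem my_proj_subsingleton (M : Type u) [AddCommGroup M] [Module R M] [Subsingleton M] :
    Module.Projective R M :=
  Module.projective_def'.2 ⟨0, by ext x; exact Subsingleton.elim _ _⟩

theorem my_resolution (S : ModuleCat.{u} R → Prop)
    (hS : ∀ M : ModuleCat.{u} R, S M → Module.FinitePresentation R M ∧
      ∃ (P Q : ModuleCat.{u} R) (i : P ⟶ Q),
        Module.Finite R P ∧ Module.Projective R P ∧ Module.Finite R Q ∧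
          Module.Projective R Q ∧ Function.Injective i ∧ Nonempty (cokernel i ≅ M)) :
    ∀ E : ModuleCat.{u} R, ExtClosure S E →
      ∃ (P Q : ModuleCat.{u} R) (j : P ⟶ Q) (π : Q ⟶ E),
        Module.Projective R P ∧ Module.Projective R Q ∧
        Function.Injective j ∧ Function.Surjective π ∧
        LinearMap.range j.hom = LinearMap.ker π.hom := by
  intro E hE
  induction hE with
  | mem M hM =>
    obtain ⟨-, P, Q, i, -, hP, -, hQ, hinj, ⟨φ⟩⟩ := hS M hM
    let e : (↥Q ⧸ LinearMap.range i.hom) ≃ₗ[R] ↥M :=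
      ((ModuleCat.cokernelIsoRangeQuotient i).symm ≪≫ φ).toLinearEquiv
    refine ⟨P, Q, i, ModuleCat.ofHom (e.toLinearMap ∘ₗ (LinearMap.range i.hom).mkQ), hP, hQ, hinj,
      e.surjective.comp (Submodule.mkQ_surjective _), ?_⟩
    ext x
    constructor
    · rintro ⟨y, rfl⟩
      have hm : (LinearMap.range i.hom).mkQ (i y) = 0 := by
        rw [Submodule.mkQ_apply, Submodule.Quotient.mk_eq_zero]
        exact ⟨y, rfl⟩
      show e ((LinearMap.range i.hom).mkQ (i y)) = 0
      rw [hm, map_zero]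
    · intro hx
      have h0 : e ((LinearMap.range i.hom).mkQ x) = 0 := hx
      have := e.map_eq_zero_iff.1 h0
      rw [Submodule.mkQ_apply, Submodule.Quotient.mk_eq_zero] at this
      exact this
  | zero M hsub =>
    refine ⟨M, M, 𝟙 M, 𝟙 M, my_proj_subsingleton ↥M, my_proj_subsingleton ↥M,
      fun a b h => h, fun a => ⟨a, rfl⟩, ?_⟩
    ext x
    constructor
    · intro _
      have : x = 0 := Subsingleton.elim x 0
      simpa [LinearMap.mem_ker] using this
    · intro _
      exact ⟨x, rfl⟩
  | @ext A B C i p hinj hsurj hexact hA hC IHA IHC =>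
    obtain ⟨PA, QA, jA, πA, hPA, hQA, hjA, hπA, hexA⟩ := IHA
    obtain ⟨PC, QC, jC, πC, hPC, hQC, hjC, hπC, hexC⟩ := IHC
    obtain ⟨f, hf⟩ := Module.projective_lifting_property p.hom πC.hom hsurj
    have hfj : ∀ x : ↥PC, f (jC x) ∈ LinearMap.range i.hom := by
      intro x
      rw [hexact, LinearMap.mem_ker]
      have : p (f (jC x)) = πC (jC x) := DFunLike.congr_fun hf (jC x)
      rw [this]
      have : jC x ∈ LinearMap.ker πC.hom := hexC ▸ LinearMap.mem_range_self jC.hom x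
      exact this
    obtain ⟨t, ht⟩ := my_factor hinj (f ∘ₗ jC.hom) (by simpa using hfj)
    obtain ⟨s, hs⟩ := Module.projective_lifting_property πA.hom t hπA
    refine ⟨ModuleCat.of R (↥PA × ↥PC), ModuleCat.of R (↥QA × ↥QC),
      ModuleCat.ofHom ((LinearMap.coprod jA.hom (-s)).prod (jC.hom ∘ₗ LinearMap.snd R ↥PA ↥PC)),
      ModuleCat.ofHom (LinearMap.coprod (i.hom ∘ₗ πA.hom) f), (by haveI := hPA; haveI := hPC; infer_instance : Module.Projective R (↥PA × ↥PC)), (by haveI := hQA; haveI := hQC; infer_instance : Module.Projective R (↥QA × ↥QC)), ?_, ?_, ?_⟩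
    · -- injectivity
      rintro ⟨u, v⟩ ⟨u', v'⟩ h
      have h1 : jA u + -s v = jA u' + -s v' := congrArg Prod.fst h
      have h2 : jC v = jC v' := by simpa using congrArg Prod.snd h
      have hv : v = v' := hjC h2
      subst hv
      exact Prod.ext (hjA (add_right_cancel h1)) rfl
    · -- surjectivity
      intro b
      obtain ⟨y, hy⟩ := hπC (p b)
      have : b - f y ∈ LinearMap.range i.hom := by
        rw [hexact, LinearMap.mem_ker, map_sub]
        have : p (f y) = πC y := DFunLike.congr_fun hf y
        rw [this, hy, sub_self]
      obtain ⟨a, ha⟩ := this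
      obtain ⟨x, hx⟩ := hπA a
      refine ⟨(x, y), ?_⟩
      show i (πA x) + f y = b
      rw [hx, ha]
      abel
    · -- range = ker
      have htapp : ∀ x, i (t x) = f (jC x) := fun x => DFunLike.congr_fun ht x
      have hsapp : ∀ x, πA (s x) = t x := fun x => DFunLike.congr_fun hs x
      ext ⟨x, y⟩
      constructor
      · rintro ⟨⟨u, v⟩, huv⟩
        have h1 : jA u + -(s v) = x := congrArg Prod.fst huv
        have h2 : jC v = y := congrArg Prod.snd huv
        have hjAu : πA (jA u) = 0 := by
          have : jA u ∈ LinearMap.ker πA.hom := by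
            rw [← hexA]; exact LinearMap.mem_range_self jA.hom u
          exact this
        show i (πA x) + f y = 0
        rw [← h1, ← h2, map_add, map_add, hjAu, map_zero, zero_add, map_neg, hsapp,
          map_neg, htapp]
        exact neg_add_cancel _
      · intro hxy
        have hxy' : i (πA x) + f y = 0 := hxy
        have hy0 : πC y = 0 := by
          have h1 : p (i (πA x)) = 0 := by
            have : i (πA x) ∈ LinearMap.ker p.hom := by
              rw [← hexact]; exact LinearMap.mem_range_self i.hom (πA x)
            exact this
          have h2 : p (f y) = πC y := DFunLike.congr_fun hf y
          have h3 := congrArg p hxy'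
          rw [map_add, h1, zero_add, h2, map_zero] at h3
          exact h3
        obtain ⟨q, hq⟩ : y ∈ LinearMap.range jC.hom := by rw [hexC]; exact LinearMap.mem_ker.2 hy0
        have hxq : πA x + πA (s q) = 0 := by
          have h4 : i (πA x + πA (s q)) = i 0 := by
            rw [map_zero, map_add, hsapp, htapp, hq]
            exact hxy'
          exact hinj h4
        have hxq' : πA (x + s q) = 0 := by rw [map_add]; exact hxq
        obtain ⟨u, hu⟩ : x + s q ∈ LinearMap.range jA.hom := by rw [hexA]; exact LinearMap.mem_ker.2 hxq'
        refine ⟨(u, q), ?_⟩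
        show (jA u + -(s q), jC q) = (x, y)
        rw [hq, hu]
        exact Prod.ext (add_neg_cancel_right x (s q)) rfl

/-- The class `U` of quotients of modules in the extension closure of `S`. -/
def QuotOfExtClosure (S : ModuleCat.{u} R → Prop) : ModuleCat.{u} R → Prop :=
  fun U => ∃ E : ModuleCat.{u} R, ExtClosure S E ∧ ∃ π : E ⟶ U, Function.Surjective π

/-- Let `S` be a set of finitely presented right `R`-modules of projective dimension at
most 1, `E` its extension closure and `U` the class of quotients of modules in `E`.
Then `U` is closed under extensions. -/
theorem quotOfExtClosure_closed_under_extensions (S : ModuleCat.{u} R → Prop)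
    (hS : ∀ M : ModuleCat.{u} R, S M → Module.FinitePresentation R M ∧
      ∃ (P Q : ModuleCat.{u} R) (i : P ⟶ Q),
        Module.Finite R P ∧ Module.Projective R P ∧ Module.Finite R Q ∧
          Module.Projective R Q ∧ Function.Injective i ∧ Nonempty (cokernel i ≅ M)) :
    ∀ ⦃U₁ U U₂ : ModuleCat.{u} R⦄ (i : U₁ ⟶ U) (p : U ⟶ U₂),
      Function.Injective i → Function.Surjective p →
      LinearMap.range i.hom = LinearMap.ker p.hom →
      QuotOfExtClosure S U₁ → QuotOfExtClosure S U₂ → QuotOfExtClosure S U := by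
  rintro U₁ U U₂ i p hinj hsurj hexact ⟨E₁, hE₁, π₁, hπ₁⟩ ⟨E₂, hE₂, π₂, hπ₂⟩
  obtain ⟨P, Q, j, πQ, hP, hQ, hj, hπQ, hexQ⟩ := my_resolution S hS E₂ hE₂
  haveI := hP; haveI := hQ
  obtain ⟨f, hf⟩ := Module.projective_lifting_property p.hom
    (LinearMap.comp π₂.hom πQ.hom) hsurj
  have hfj : ∀ x : ↥P, f (j x) ∈ LinearMap.range i.hom := by
    intro x
    rw [hexact, LinearMap.mem_ker]
    have h1 : p (f (j x)) = π₂ (πQ (j x)) := DFunLike.congr_fun hf (j x)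
    have h2 : πQ (j x) = 0 := by
      have : j x ∈ LinearMap.ker πQ.hom := by rw [← hexQ]; exact LinearMap.mem_range_self j.hom x
      exact this
    rw [h1, h2, map_zero]
  obtain ⟨h, hh⟩ := my_factor hinj (f ∘ₗ j.hom) (fun x => hfj x)
  obtain ⟨g, hg⟩ := Module.projective_lifting_property π₁.hom h hπ₁
  have hhapp : ∀ x, i (h x) = f (j x) := fun x => DFunLike.congr_fun hh x
  have hgapp : ∀ x, π₁ (g x) = h x := fun x => DFunLike.congr_fun hg x
  set d : ↥P →ₗ[R] ↥E₁ × ↥Q := g.prod (-j.hom) with hd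
  set N : Submodule R (↥E₁ × ↥Q) := LinearMap.range d with hN
  have hdapp : ∀ x, d x = (g x, -(j x)) := fun x => rfl
  let Y : ModuleCat.{u} R := ModuleCat.of R ((↥E₁ × ↥Q) ⧸ N)
  let ι : E₁ ⟶ Y := ModuleCat.ofHom (N.mkQ ∘ₗ LinearMap.inl R ↥E₁ ↥Q)
  have hq2ker : N ≤ LinearMap.ker (πQ.hom ∘ₗ LinearMap.snd R ↥E₁ ↥Q) := by
    rintro z ⟨x, rfl⟩
    show πQ (-(j x)) = 0
    have : πQ (j x) = 0 := by
      have : j x ∈ LinearMap.ker πQ.hom := by rw [← hexQ]; exact LinearMap.mem_range_self j.hom x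
      exact this
    rw [map_neg, this, neg_zero]
  let q2 : Y ⟶ E₂ := ModuleCat.ofHom (N.liftQ (πQ.hom ∘ₗ LinearMap.snd R ↥E₁ ↥Q) hq2ker)
  have hφker : N ≤ LinearMap.ker
      (LinearMap.coprod (i.hom ∘ₗ π₁.hom) f) := by
    rintro z ⟨x, rfl⟩
    show i (π₁ (g x)) + f (-(j x)) = 0
    rw [hgapp, hhapp, map_neg, add_neg_cancel]
  let φ : Y ⟶ U := ModuleCat.ofHom (N.liftQ
    (LinearMap.coprod (i.hom ∘ₗ π₁.hom) f) hφker)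
  have hYext : ExtClosure S Y := by
    refine ExtClosure.ext ι q2 ?_ ?_ ?_ hE₁ hE₂
    · -- ι injective
      intro a b hab
      have hmem : (a, (0 : ↥Q)) - (b, (0 : ↥Q)) ∈ N := (Submodule.Quotient.eq N).1 hab
      obtain ⟨x, hx⟩ := hmem
      have hx2 : -(j x) = 0 - 0 := congrArg Prod.snd hx
      have hx0 : x = 0 := by
        apply hj
        rw [map_zero, ← neg_neg (j x), hx2]
        simp
      have hx1 : g x = a - b := congrArg Prod.fst hx
      rw [hx0, map_zero] at hx1
      exact (sub_eq_zero.1 hx1.symm)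
    · -- q2 surjective
      intro e
      obtain ⟨y, hy⟩ := hπQ e
      exact ⟨N.mkQ ((0 : ↥E₁), y), hy⟩
    · -- range ι = ker q2
      ext z
      constructor
      · rintro ⟨a, rfl⟩
        show πQ (0 : ↥Q) = 0
        exact map_zero πQ.hom
      · intro hz
        obtain ⟨⟨a, b⟩, rfl⟩ := Submodule.Quotient.mk_surjective N z
        have hb : πQ b = 0 := hz
        obtain ⟨x, rfl⟩ : b ∈ LinearMap.range j.hom := by
          rw [hexQ]; exact LinearMap.mem_ker.2 hb
        refine ⟨a + g x, ?_⟩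
        show N.mkQ (a + g x, (0 : ↥Q)) = Submodule.Quotient.mk (a, j x)
        rw [Submodule.mkQ_apply, Submodule.Quotient.eq]
        refine ⟨x, ?_⟩
        rw [hdapp, Prod.mk_sub_mk, Prod.mk.injEq]
        exact ⟨(add_sub_cancel_left a (g x)).symm, (zero_sub (j x)).symm⟩
  refine ⟨Y, hYext, φ, ?_⟩
  intro u
  obtain ⟨e, he⟩ := hπ₂ (p u)
  obtain ⟨b, rfl⟩ := hπQ e
  have hub : u - f b ∈ LinearMap.range i.hom := by
    rw [hexact, LinearMap.mem_ker, map_sub]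
    have : p (f b) = π₂ (πQ b) := DFunLike.congr_fun hf b
    rw [this, he, sub_self]
  obtain ⟨w, hw⟩ := hub
  obtain ⟨a, ha⟩ := hπ₁ w
  refine ⟨N.mkQ (a, b), ?_⟩
  show i (π₁ a) + f b = u
  rw [ha, hw]
  abel
end

section
/- Let S be a set of finitely presented right R-modules of projective dimension at most 1 and let (T, F) be the torsion theory generated by S. Then every finitely generated module in T is a quotient of a module in the extension closure E of S, and every finitely generated submodule of a torsion module T is contained in a submodule of T that is a quotient of a module in E. -/
open CategoryTheory CategoryTheory.Limits

universe u

variable {R : Type u} [Ring R]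

/-- `F` is torsion-free for the torsion theory generated by `S`. -/
def TorsionFreeFor (S : ModuleCat.{u} R → Prop) (F : ModuleCat.{u} R) : Prop :=
  ∀ (N : ModuleCat.{u} R), S N → ∀ φ : N ⟶ F, φ = 0

/-- `T` is torsion for the torsion theory generated by `S`. -/
def TorsionFor (S : ModuleCat.{u} R → Prop) (T : ModuleCat.{u} R) : Prop :=
  ∀ (F : ModuleCat.{u} R), TorsionFreeFor S F → ∀ φ : T ⟶ F, φ = 0

namespace TorsionAux

variable (S : ModuleCat.{u} R → Prop)

lemma extClosure_of_iso {B C : ModuleCat.{u} R} (e : B ≅ C) (hC : ExtClosure S C) :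
    ExtClosure S B := by
  have hbij : Function.Bijective e.hom :=
    (ConcreteCategory.isIso_iff_bijective e.hom).mp inferInstance
  refine ExtClosure.ext (A := ModuleCat.of R PUnit.{u+1}) 0 e.hom
    (fun a b _ => Subsingleton.elim a b) hbij.2 ?_ (ExtClosure.zero _ ?_) hC
  · rw [ModuleCat.hom_zero, LinearMap.range_zero, LinearMap.ker_eq_bot.mpr hbij.1]
  · exact inferInstanceAs (Subsingleton PUnit)

lemma qsub_range {Y T : ModuleCat.{u} R} (hY : ExtClosure S Y) (f : Y ⟶ T) :
    QuotOfExtClosure S (ModuleCat.of R ↥(LinearMap.range f.hom)) :=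
  ⟨Y, hY, ModuleCat.ofHom (LinearMap.rangeRestrict f.hom), LinearMap.surjective_rangeRestrict f.hom⟩

lemma qsub_bot (T : ModuleCat.{u} R) :
    QuotOfExtClosure S (ModuleCat.of R ↥(⊥ : Submodule R ↥T)) :=
  ⟨ModuleCat.of R ↥(⊥ : Submodule R ↥T),
    ExtClosure.zero _ inferInstance, 𝟙 _, Function.surjective_id⟩

lemma qsub_sup {T : ModuleCat.{u} R} {U V : Submodule R ↥T}
    (hU : QuotOfExtClosure S (ModuleCat.of R ↥U))
    (hV : QuotOfExtClosure S (ModuleCat.of R ↥V)) :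
    QuotOfExtClosure S (ModuleCat.of R ↥(U ⊔ V)) := by
  obtain ⟨E₁, hE₁, π₁, hπ₁⟩ := hU
  obtain ⟨E₂, hE₂, π₂, hπ₂⟩ := hV
  refine ⟨ModuleCat.of R (↥E₁ × ↥E₂), ?_, ?_⟩
  · exact ExtClosure.ext (ModuleCat.ofHom (LinearMap.inl R ↥E₁ ↥E₂)) (ModuleCat.ofHom (LinearMap.snd R ↥E₁ ↥E₂))
      LinearMap.inl_injective LinearMap.snd_surjective (LinearMap.range_inl R ↥E₁ ↥E₂) hE₁ hE₂
  · set w : ↥E₁ × ↥E₂ →ₗ[R] ↥T :=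
      (U.subtype.comp π₁.hom).comp (LinearMap.fst R ↥E₁ ↥E₂)
        + (V.subtype.comp π₂.hom).comp (LinearMap.snd R ↥E₁ ↥E₂) with hw
    have hwle : ∀ x, w x ∈ U ⊔ V := by
      intro x
      exact Submodule.add_mem_sup (U.coe_mem (π₁ x.1)) (V.coe_mem (π₂ x.2))
    refine ⟨ModuleCat.ofHom (w.codRestrict (U ⊔ V) hwle), ?_⟩
    rintro ⟨x, hx⟩
    obtain ⟨u, hu, v, hv, hx⟩ := Submodule.mem_sup.mp hx
    obtain ⟨e₁, he₁⟩ := hπ₁ ⟨u, hu⟩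
    obtain ⟨e₂, he₂⟩ := hπ₂ ⟨v, hv⟩
    refine ⟨(e₁, e₂), Subtype.ext ?_⟩
    show w (e₁, e₂) = x
    simp only [hw, LinearMap.add_apply, LinearMap.comp_apply, LinearMap.fst_apply,
      LinearMap.snd_apply, Submodule.coe_subtype]
    erw [he₁, he₂]
    exact hx

lemma exists_mem_of_fg {M : Type u} [AddCommGroup M] [Module R M]
    (𝒰 : Set (Submodule R M)) (hbot : ⊥ ∈ 𝒰)
    (hsup : ∀ U ∈ 𝒰, ∀ V ∈ 𝒰, U ⊔ V ∈ 𝒰) {N : Submodule R M}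
    (hN : N.FG) (hle : N ≤ sSup 𝒰) : ∃ U ∈ 𝒰, N ≤ U := by
  have hdir : DirectedOn (· ≤ ·) 𝒰 :=
    fun U hU V hV => ⟨U ⊔ V, hsup U hU V hV, le_sup_left, le_sup_right⟩
  classical
  obtain ⟨s, rfl⟩ := hN
  induction s using Finset.induction_on with
  | empty => exact ⟨⊥, hbot, by simp⟩
  | insert a s hx ih =>
    have h1 : Submodule.span R (s : Set M) ≤ sSup 𝒰 :=
      le_trans (Submodule.span_mono (by simp)) hle
    obtain ⟨U, hU, hUle⟩ := ih h1
    have ha : a ∈ sSup 𝒰 := hle (Submodule.subset_span (by simp))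
    obtain ⟨V, hV, haV⟩ := (Submodule.mem_sSup_of_directed ⟨⊥, hbot⟩ hdir).mp ha
    refine ⟨U ⊔ V, hsup U hU V hV, ?_⟩
    rw [Finset.coe_insert, Submodule.span_insert]
    exact sup_le (Submodule.span_le.mpr (by
        simpa using Submodule.mem_sup_right haV))
      (le_trans hUle le_sup_left)

lemma hom_to_quot_eq_zero
    (hS : ∀ M : ModuleCat.{u} R, S M → Module.FinitePresentation R M ∧
      ∃ (P Q : ModuleCat.{u} R) (i : P ⟶ Q),
        Module.Finite R P ∧ Module.Projective R P ∧ Module.Finite R Q ∧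
          Module.Projective R Q ∧ Function.Injective i ∧ Nonempty (cokernel i ≅ M))
    {T : ModuleCat.{u} R} (t : Submodule R ↥T)
    (hup : ∀ (Y : ModuleCat.{u} R), ExtClosure S Y → ∀ f : Y ⟶ T, LinearMap.range f.hom ≤ t)
    (hfg : ∀ N : Submodule R ↥T, N.FG → N ≤ t →
      ∃ U : Submodule R ↥T, QuotOfExtClosure S (ModuleCat.of R ↥U) ∧ N ≤ U)
    (M : ModuleCat.{u} R) (hM : S M) (φ : M ⟶ ModuleCat.of R (↥T ⧸ t)) : φ = 0 := by
  obtain ⟨-, P, Q, i, hPfin, hPproj, hQfin, hQproj, hi, ⟨e⟩⟩ := hS M hM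
  haveI := hPfin; haveI := hPproj; haveI := hQfin; haveI := hQproj
  set α : ModuleCat.of R (↥Q ⧸ LinearMap.range i.hom) ≅ M :=
    (ModuleCat.cokernelIsoRangeQuotient i).symm ≪≫ e with hα
  set ρ : ↥Q →ₗ[R] (↥T ⧸ t) :=
    LinearMap.comp (α.hom ≫ φ).hom (LinearMap.range i.hom).mkQ with hρ
  obtain ⟨g, hg⟩ := Module.projective_lifting_property t.mkQ ρ (Submodule.mkQ_surjective t)
  have hgi : ∀ p : ↥P, g (i p) ∈ t := by
    intro p
    have h1 : t.mkQ (g (i p)) = ρ (i p) := LinearMap.congr_fun hg (i p)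
    have h2 : ρ (i p) = 0 := by
      have h0 : (LinearMap.range i.hom).mkQ (i p) = 0 :=
        (Submodule.Quotient.mk_eq_zero _).mpr (LinearMap.mem_range_self i.hom p)
      rw [hρ, LinearMap.comp_apply]
      erw [h0]
      exact map_zero _
    rw [← Submodule.Quotient.mk_eq_zero, ← Submodule.mkQ_apply, h1, h2]
  -- the image of `P` lands in a single quotient-of-E submodule `U`
  have hrfg : (LinearMap.range (g.comp i.hom)).FG := by
    have h := Submodule.FG.map (g.comp i.hom) (Module.Finite.fg_top (R := R) (M := ↥P))
    rwa [Submodule.map_top] at h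
  obtain ⟨U, hU, hle⟩ := hfg _ hrfg (by rintro _ ⟨p, rfl⟩; exact hgi p)
  obtain ⟨Y, hY, h, hh⟩ := hU
  set gi : ↥P →ₗ[R] ↥U :=
    LinearMap.codRestrict U (g.comp i.hom) (fun p => hle ⟨p, rfl⟩) with hgidef
  obtain ⟨k, hk⟩ := Module.projective_lifting_property h.hom gi hh
  -- the extension `X` of `Q ⧸ range i` by `Y`
  set Z : Submodule R (↥Q × ↥Y) :=
    LinearMap.range (LinearMap.prod i.hom (-k)) with hZ
  set X : ModuleCat.{u} R := ModuleCat.of R ((↥Q × ↥Y) ⧸ Z) with hX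
  set j : Y ⟶ X := ModuleCat.ofHom (Z.mkQ.comp (LinearMap.inr R ↥Q ↥Y)) with hj
  have hZc2 : Z ≤ LinearMap.ker ((LinearMap.range i.hom).mkQ.comp (LinearMap.fst R ↥Q ↥Y)) := by
    rintro _ ⟨p, rfl⟩
    show (LinearMap.range i.hom).mkQ ((i p, -(k p)).1) = 0
    exact (Submodule.Quotient.mk_eq_zero _).mpr (LinearMap.mem_range_self i.hom p)
  set pr : X ⟶ ModuleCat.of R (↥Q ⧸ LinearMap.range i.hom) :=
    ModuleCat.ofHom (Z.liftQ ((LinearMap.range i.hom).mkQ.comp (LinearMap.fst R ↥Q ↥Y)) hZc2) with hpr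
  have hjinj : Function.Injective j := by
    refine (injective_iff_map_eq_zero j.hom).mpr (fun y hy => ?_)
    have hy' : ((0 : ↥Q), y) ∈ Z := by
      have h0 : Z.mkQ ((0 : ↥Q), y) = 0 := hy
      rwa [Submodule.mkQ_apply, Submodule.Quotient.mk_eq_zero] at h0
    obtain ⟨p, hp⟩ := hy'
    have hp1 : i p = 0 := congrArg Prod.fst hp
    have hp0 : p = 0 := hi (by rw [hp1, map_zero])
    have hp2 : -(k p) = y := congrArg Prod.snd hp
    rw [← hp2, hp0, map_zero, neg_zero]
  have hprsurj : Function.Surjective pr := by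
    intro x
    obtain ⟨q, rfl⟩ := Submodule.mkQ_surjective _ x
    exact ⟨Z.mkQ (q, 0), by rw [hpr]; erw [Submodule.liftQ_apply]⟩
  have hexact : LinearMap.range j.hom = LinearMap.ker pr.hom := by
    ext x
    constructor
    · rintro ⟨y, rfl⟩
      show pr (Z.mkQ (0, y)) = 0
      rw [hpr]; erw [Submodule.liftQ_apply]
      exact (Submodule.Quotient.mk_eq_zero _).mpr (by simp)
    · intro hx
      obtain ⟨⟨q, y⟩, rfl⟩ := Submodule.mkQ_surjective Z x
      have hq0 : (LinearMap.range i.hom).mkQ q = 0 := by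
        have := hx
        rw [LinearMap.mem_ker, hpr] at this
        erw [Submodule.liftQ_apply] at this
        exact this
      obtain ⟨p, hp⟩ := (Submodule.Quotient.mk_eq_zero _).mp hq0
      refine ⟨y + k p, ?_⟩
      show Z.mkQ (0, y + k p) = Z.mkQ (q, y)
      rw [Submodule.mkQ_apply, Submodule.mkQ_apply, Submodule.Quotient.eq]
      refine ⟨-p, ?_⟩
      show (i (-p), -(k (-p))) = (0, y + k p) - (q, y)
      rw [map_neg, map_neg, hp, neg_neg]
      refine Prod.ext ?_ ?_
      · show -q = 0 - q; rw [zero_sub]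
      · show k p = y + k p - y; rw [add_sub_cancel_left]
  have hXE : ExtClosure S X :=
    ExtClosure.ext j pr hjinj hprsurj hexact hY
      (extClosure_of_iso S α (ExtClosure.mem M hM))
  -- the map `X ⟶ T`
  set w : ↥Q × ↥Y →ₗ[R] ↥T :=
    g.comp (LinearMap.fst R ↥Q ↥Y)
      + (U.subtype.comp h.hom).comp (LinearMap.snd R ↥Q ↥Y) with hw
  have hZw : Z ≤ LinearMap.ker w := by
    rintro _ ⟨p, rfl⟩
    show w (i p, -(k p)) = 0
    have hkp : h.hom (k p) = gi p := LinearMap.congr_fun hk p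
    simp only [hw, LinearMap.add_apply, LinearMap.comp_apply, LinearMap.fst_apply,
      LinearMap.snd_apply, map_neg]
    erw [hkp]
    exact add_neg_cancel _
  set f : X ⟶ T := ModuleCat.ofHom (Z.liftQ w hZw) with hf
  have hranf : LinearMap.range f.hom ≤ t := hup X hXE f
  have hρ0 : ∀ q : ↥Q, ρ q = 0 := by
    intro q
    have h1 : ρ q = t.mkQ (g q) := (LinearMap.congr_fun hg q).symm
    have h2 : f (Z.mkQ (q, 0)) = g q := by
      rw [hf, Submodule.mkQ_apply]; erw [Submodule.liftQ_apply]
      show g q + (U.subtype) (h.hom 0) = g q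
      rw [map_zero, map_zero, add_zero]
    rw [h1, ← h2, Submodule.mkQ_apply, Submodule.Quotient.mk_eq_zero]
    exact hranf ⟨_, rfl⟩
  -- conclude `φ = 0`
  have hαsurj : Function.Surjective α.hom :=
    ((ConcreteCategory.isIso_iff_bijective α.hom).mp inferInstance).2
  ext m
  obtain ⟨x, rfl⟩ := hαsurj m
  obtain ⟨q, rfl⟩ := Submodule.mkQ_surjective _ x
  exact hρ0 q

end TorsionAux

/-- Let `S` be a set of finitely presented right `R`-modules of projective dimension at
most 1 and let `(T, F)` be the torsion theory generated by `S`.  Then every finitely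
generated torsion module is a quotient of a module in the extension closure `E` of `S`,
and every finitely generated submodule of a torsion module is contained in a submodule
which is a quotient of a module in `E`. -/
theorem torsion_modules_are_quotients_of_extClosure (S : ModuleCat.{u} R → Prop)
    (hS : ∀ M : ModuleCat.{u} R, S M → Module.FinitePresentation R M ∧
      ∃ (P Q : ModuleCat.{u} R) (i : P ⟶ Q),
        Module.Finite R P ∧ Module.Projective R P ∧ Module.Finite R Q ∧
          Module.Projective R Q ∧ Function.Injective i ∧ Nonempty (cokernel i ≅ M)) :
    (∀ T : ModuleCat.{u} R, TorsionFor S T → Module.Finite R T →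
      QuotOfExtClosure S T) ∧
    (∀ T : ModuleCat.{u} R, TorsionFor S T → ∀ N : Submodule R ↥T, N.FG →
      ∃ U : Submodule R ↥T, N ≤ U ∧ QuotOfExtClosure S (ModuleCat.of R ↥U)) := by
  have main : ∀ T : ModuleCat.{u} R, TorsionFor S T → ∀ N : Submodule R ↥T, N.FG →
      ∃ U : Submodule R ↥T, N ≤ U ∧ QuotOfExtClosure S (ModuleCat.of R ↥U) := by
    intro T hT N hN
    set 𝒰 : Set (Submodule R ↥T) := {U | QuotOfExtClosure S (ModuleCat.of R ↥U)} with h𝒰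
    have hbot : ⊥ ∈ 𝒰 := TorsionAux.qsub_bot S T
    have hsup : ∀ U ∈ 𝒰, ∀ V ∈ 𝒰, U ⊔ V ∈ 𝒰 := fun U hU V hV => TorsionAux.qsub_sup S hU hV
    set t : Submodule R ↥T := sSup 𝒰 with ht
    have hup : ∀ (Y : ModuleCat.{u} R), ExtClosure S Y → ∀ f : Y ⟶ T,
        LinearMap.range f.hom ≤ t :=
      fun Y hY f => le_sSup (TorsionAux.qsub_range S hY f)
    have hfg' : ∀ N' : Submodule R ↥T, N'.FG → N' ≤ t →
        ∃ U : Submodule R ↥T, QuotOfExtClosure S (ModuleCat.of R ↥U) ∧ N' ≤ U := by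
      intro N' hN' hle
      obtain ⟨U, hU, h⟩ := TorsionAux.exists_mem_of_fg 𝒰 hbot hsup hN' hle
      exact ⟨U, hU, h⟩
    have htf : TorsionFreeFor S (ModuleCat.of R (↥T ⧸ t)) :=
      fun M hM φ => TorsionAux.hom_to_quot_eq_zero S hS t hup hfg' M hM φ
    have hzero : (ModuleCat.ofHom t.mkQ : T ⟶ ModuleCat.of R (↥T ⧸ t)) = 0 := hT _ htf _
    have htop : t = ⊤ := by
      rw [eq_top_iff]
      intro x _
      have hx : t.mkQ x = (0 : T ⟶ ModuleCat.of R (↥T ⧸ t)).hom x := LinearMap.congr_fun (congrArg ModuleCat.Hom.hom hzero) x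
      rw [ModuleCat.hom_zero, LinearMap.zero_apply] at hx
      rwa [Submodule.mkQ_apply, Submodule.Quotient.mk_eq_zero] at hx
    obtain ⟨U, hU, hle⟩ := hfg' N hN (htop ▸ le_top)
    exact ⟨U, hle, hU⟩
  refine ⟨?_, fun T hT N hN => main T hT N hN⟩
  intro T hT hfin
  obtain ⟨U, hle, hU⟩ := main T hT ⊤ Module.Finite.fg_top
  have hUtop : U = ⊤ := top_le_iff.mp hle
  subst hUtop
  obtain ⟨E, hE, π, hπ⟩ := hU
  refine ⟨E, hE,
    π ≫ (ModuleCat.ofHom (Submodule.topEquiv (R := R) (M := ↥T)).toLinearMap :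
      ModuleCat.of R ↥(⊤ : Submodule R ↥T) ⟶ T), ?_⟩
  intro x
  obtain ⟨y, hy⟩ := hπ ⟨x, trivial⟩
  refine ⟨y, ?_⟩
  show (Submodule.topEquiv (R := R) (M := ↥T)).toLinearMap (π y) = x
  erw [hy]
  rfl
end
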